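/- arXiv:1308.1241 — 7 statements merged into one kernel-verified Lean document; each statement's English description precedes it below -/
import Mathlib

section
/- Under assumptions (A3)–(A5) and Case (I), i.e. m^{β(1−γ)−1/2+γ}·|Δ_m| → 0 as m → ∞, the normalizing sequence satisfies a_m(c) = (σ c m^{1/2−γ}/|Δ_m|)^{1/(1−γ)}·(1 + o(1)), i.e. a_m(c)·(σ c m^{1/2−γ}/|Δ_m|)^{−1/(1−γ)} → 1 as m → ∞. -/
open MeasureTheory ProbabilityTheory Filter Finset Real Topology

noncomputable section

/-- The standard normal distribution function `Φ`. -/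
def stdNormalCDF (x : ℝ) : ℝ := ((gaussianReal 0 1) (Set.Iic x)).toReal

/-- A standard Wiener process (standard Brownian motion) on `[0,∞)`:
it starts at `0`, has almost surely continuous paths, independent increments, and
`W t - W s` is centered Gaussian with variance `t - s` for `0 ≤ s < t`. -/
def IsStandardWiener {Ω : Type*} [MeasurableSpace Ω] (P : Measure Ω)
    (W : ℝ → Ω → ℝ) : Prop :=
  (∀ᵐ ω ∂P, W 0 ω = 0) ∧
  (∀ᵐ ω ∂P, Continuous fun t => W t ω) ∧
  (∀ n : ℕ, ∀ t : Fin (n + 1) → ℝ, (∀ i, 0 ≤ t i) → StrictMono t →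
    iIndepFun
      (fun i : Fin n => fun ω => W (t i.succ) ω - W (t i.castSucc) ω) P) ∧
  (∀ s t : ℝ, 0 ≤ s → s < t →
    Measure.map (fun ω => W t ω - W s ω) P = gaussianReal 0 (t - s).toNNReal)

/-- The change point `k*_m = ⌊θ m^β⌋` from Assumption (A3). -/
def kstar (θ β : ℝ) (m : ℕ) : ℕ := ⌊θ * (m : ℝ) ^ β⌋₊

/-- The boundary function `g(m,k) = √m (1 + k/m) (k/(k+m))^γ`. -/
def gfun (γ : ℝ) (m k : ℕ) : ℝ :=
  Real.sqrt m * (1 + (k : ℝ) / m) * ((k : ℝ) / ((k : ℝ) + m)) ^ γ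

/-- The observations in the location model: `X_i = μ + ε_i` before the change at
time `m + k*_m`, and `X_i = μ + ε_i + Δ_m` from the change on. -/
def Xloc {Ω : Type*} (μ : ℝ) (ε : ℕ → Ω → ℝ) (Δ : ℕ → ℝ) (kst : ℕ → ℕ)
    (m i : ℕ) (ω : Ω) : ℝ :=
  if m + kst m ≤ i then μ + ε i ω + Δ m else μ + ε i ω

/-- The CUSUM detector `Q(m,k) = ∑_{i=m+1}^{m+k} X_i - (k/m) ∑_{i=1}^m X_i`. -/
def Qdet {Ω : Type*} (X : ℕ → ℕ → Ω → ℝ) (m k : ℕ) (ω : Ω) : ℝ :=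
  (∑ i ∈ Finset.Icc (m + 1) (m + k), X m i ω) -
    (k : ℝ) / m * ∑ i ∈ Finset.Icc 1 m, X m i ω

/-- The one-sided Page CUSUM detector `S₁(m,k) = Q(m,k) - min_{0 ≤ i ≤ k} Q(m,i)`. -/
def S1det {Ω : Type*} (X : ℕ → ℕ → Ω → ℝ) (m k : ℕ) (ω : Ω) : ℝ :=
  Qdet X m k ω -
    (Finset.Icc 0 k).inf' (Finset.nonempty_Icc.mpr (Nat.zero_le k))
      (fun i => Qdet X m i ω)

/-- The two-sided Page CUSUM detector `S₂(m,k) = max_{0 ≤ i ≤ k} |Q(m,k) - Q(m,i)|`. -/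
def S2det {Ω : Type*} (X : ℕ → ℕ → Ω → ℝ) (m k : ℕ) (ω : Ω) : ℝ :=
  (Finset.Icc 0 k).sup' (Finset.nonempty_Icc.mpr (Nat.zero_le k))
    (fun i => |Qdet X m k ω - Qdet X m i ω|)

/-- The set of times `k ≥ 1` at which a detector `D` exceeds the boundary
`σ̂_m c g(m,k)`; the stopping time is finite iff this set is nonempty, in which
case it equals the infimum of this set. -/
def hitSet {Ω : Type*} (D : ℕ → ℕ → Ω → ℝ) (σhat : ℕ → Ω → ℝ) (c γ : ℝ)
    (m : ℕ) (ω : Ω) : Set ℕ :=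
  {k : ℕ | 1 ≤ k ∧ σhat m ω * c * gfun γ m k ≤ D m k ω}

/-- The normalizing sequence `b_m(c)`. -/
def bseq (σ γ : ℝ) (Δ : ℕ → ℝ) (kst : ℕ → ℕ) (a : ℕ → ℝ) (m : ℕ) : ℝ :=
  σ * Real.sqrt (a m) * |Δ m|⁻¹ * (1 - γ * (1 - (kst m : ℝ) / a m))⁻¹

/-- The sequence `N(m,x)` used in the proofs. -/
def Nseq (σ c γ : ℝ) (Δ : ℕ → ℝ) (kst : ℕ → ℕ) (a : ℕ → ℝ) (x : ℝ) (m : ℕ) : ℝ :=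
  (σ * c * (m : ℝ) ^ ((1 : ℝ) / 2 - γ) / Δ m + (kst m : ℝ) / a m ^ γ -
      σ * x * a m ^ ((1 : ℝ) / 2 - γ) * (1 - γ) /
        (Δ m * (1 - γ * (1 - (kst m : ℝ) / a m)))) ^ ((1 : ℝ) / (1 - γ))

/-- The drifted Wiener process `W_Δ(j) = σ W_m(j) + (j - k* + 1) Δ_m 1{j ≥ k*}`. -/
def Wdrift {Ω : Type*} (σ : ℝ) (W : ℕ → ℝ → Ω → ℝ) (Δ : ℕ → ℝ) (kst : ℕ → ℕ)
    (m j : ℕ) (ω : Ω) : ℝ :=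
  σ * W m (j : ℝ) ω +
    (if kst m ≤ j then ((j : ℝ) - (kst m : ℝ) + 1) * Δ m else 0)

/-- The Wiener counterpart `P_W(m,k) = W_Δ(k) - min_{0 ≤ i ≤ k} W_Δ(i)` of the
Page CUSUM detector. -/
def PWdet {Ω : Type*} (σ : ℝ) (W : ℕ → ℝ → Ω → ℝ) (Δ : ℕ → ℝ) (kst : ℕ → ℕ)
    (m k : ℕ) (ω : Ω) : ℝ :=
  Wdrift σ W Δ kst m k ω -
    (Finset.Icc 0 k).inf' (Finset.nonempty_Icc.mpr (Nat.zero_le k))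
      (fun i => Wdrift σ W Δ kst m i ω)

set_option maxHeartbeats 2000000 in
/-- Proposition A.1, Case (I): `a_m(c) ≈ (σ c m^{1/2-γ}/|Δ_m|)^{1/(1-γ)}`. -/
theorem aseq_asymptotics_caseI
    (σ c θ β γ : ℝ) (Δ : ℕ → ℝ) (a : ℕ → ℝ)
    (hγ : γ ∈ Set.Ico (0 : ℝ) (1 / 2)) (hσ : 0 < σ) (hc : 0 < c) (hθ : 0 < θ)
    (hβ : β ∈ Set.Ico (0 : ℝ) 1)
    (hΔne : ∀ m : ℕ, Δ m ≠ 0)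
    (hA4 : Tendsto (fun m : ℕ => Real.sqrt m * |Δ m|) atTop atTop)
    (hA5 : ∃ M : ℝ, ∀ m : ℕ, |Δ m| ≤ M)
    (ha : ∀ m : ℕ, 0 < a m ∧
      a m = σ * c * (m : ℝ) ^ ((1 : ℝ) / 2 - γ) * |Δ m|⁻¹ * a m ^ γ + (kstar θ β m : ℝ))
    (hcaseI : Tendsto (fun m : ℕ => (m : ℝ) ^ (β * (1 - γ) - 1 / 2 + γ) * |Δ m|) atTop (𝓝 0))
    :
    Tendsto (fun m : ℕ =>
        a m * (σ * c * (m : ℝ) ^ ((1 : ℝ) / 2 - γ) / |Δ m|) ^ (-(1 / (1 - γ))))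
      atTop (𝓝 1) := by
  obtain ⟨hγ0, hγh⟩ := hγ
  obtain ⟨hβ0, hβ1⟩ := hβ
  have hγ1 : γ < 1 := by linarith
  have h1γ : (0:ℝ) < 1 - γ := by linarith
  set p : ℝ := 1 / (1 - γ) with hp
  have hp0 : 0 < p := by positivity
  set e : ℝ := β * (1 - γ) - 1 / 2 + γ with he
  set C : ℝ := θ * ((σ * c) ^ p)⁻¹ with hC
  set r : ℕ → ℝ := fun m => σ * c * (m : ℝ) ^ ((1:ℝ)/2 - γ) / |Δ m| with hrdef
  set s : ℕ → ℝ := fun m => (m : ℝ) ^ e * |Δ m| with hsdef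
  set ε : ℕ → ℝ := fun m => (kstar θ β m : ℝ) / (r m) ^ p with hεdef
  have hεnonneg : ∀ m, 0 ≤ ε m := by
    intro m
    apply div_nonneg (Nat.cast_nonneg _)
    apply Real.rpow_nonneg
    apply div_nonneg _ (abs_nonneg _)
    positivity
  -- main pointwise bounds for m ≥ 1
  have hmain : ∀ m : ℕ, 1 ≤ m →
      (1 ≤ a m * (r m) ^ (-p) ∧ a m * (r m) ^ (-p) ≤ 1 + ε m / (1 - γ)) ∧
      ε m ≤ C * (s m) ^ p := by
    intro m hm
    have hmpos : (0:ℝ) < m := by exact_mod_cast hm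
    have hΔ : 0 < |Δ m| := abs_pos.mpr (hΔne m)
    have hrpos : 0 < r m := by
      simp only [hrdef]
      have : (0:ℝ) < (m:ℝ) ^ ((1:ℝ)/2 - γ) := Real.rpow_pos_of_pos hmpos _
      positivity
    have hApos : 0 < (r m) ^ p := Real.rpow_pos_of_pos hrpos p
    obtain ⟨hapos, haeq⟩ := ha m
    set A : ℝ := (r m) ^ p with hA
    have hgoalu : a m * (r m) ^ (-p) = a m / A := by
      rw [Real.rpow_neg hrpos.le, div_eq_mul_inv]
    set u : ℝ := a m / A with hu
    have hupos : 0 < u := div_pos hapos hApos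
    -- the rescaled equation u = u^γ + ε
    have hne : (1:ℝ) - γ ≠ 0 := h1γ.ne'
    have hrm : r m = σ * c * (m:ℝ) ^ ((1:ℝ)/2 - γ) * |Δ m|⁻¹ := by
      simp only [hrdef]; rw [div_eq_mul_inv]
    have haeq' : a m = r m * a m ^ γ + (kstar θ β m : ℝ) := by
      rw [hrm]; exact haeq
    have hueq : u = u ^ γ + ε m := by
      have hrA : r m * A ^ (γ - 1) = 1 := by
        rw [hA]
        nth_rewrite 1 [← Real.rpow_one (r m)]
        rw [← Real.rpow_mul hrpos.le, ← Real.rpow_add hrpos]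
        have h0 : (1:ℝ) + p * (γ - 1) = 0 := by rw [hp]; field_simp; ring
        rw [h0, Real.rpow_zero]
      have haA : a m = u * A := by
        rw [hu, div_mul_cancel₀ _ hApos.ne']
      have h2 : r m * a m ^ γ / A = u ^ γ := by
        rw [haA, Real.mul_rpow hupos.le hApos.le]
        have hAg : A ^ γ / A = A ^ (γ - 1) := by
          nth_rewrite 2 [← Real.rpow_one A]
          rw [← Real.rpow_sub hApos]
        calc r m * (u ^ γ * A ^ γ) / A = (r m * (A ^ γ / A)) * u ^ γ := by ring
          _ = (r m * A ^ (γ - 1)) * u ^ γ := by rw [hAg]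
          _ = u ^ γ := by rw [hrA, one_mul]
      have h3 : u = (r m * a m ^ γ + (kstar θ β m : ℝ)) / A := by
        rw [hu]; congr 1
      calc u = (r m * a m ^ γ + (kstar θ β m : ℝ)) / A := h3
        _ = r m * a m ^ γ / A + (kstar θ β m : ℝ) / A := add_div _ _ _
        _ = u ^ γ + ε m := by rw [h2, hA]
    -- lower bound 1 ≤ u
    have hlow : 1 ≤ u := by
      by_contra hlt
      push_neg at hlt
      have h1 : u ^ γ ≤ u := by
        nlinarith [hεnonneg m]
      have h2 : u < u ^ γ := by
        calc u = u ^ (1:ℝ) := (Real.rpow_one u).symm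
          _ < u ^ γ := Real.rpow_lt_rpow_of_exponent_gt hupos hlt hγ1
      linarith
    -- upper bound via weighted AM-GM: u^γ ≤ γ u + (1-γ)
    have hgm : u ^ γ ≤ γ * u + (1 - γ) := by
      have := Real.geom_mean_le_arith_mean2_weighted hγ0 h1γ.le hupos.le
        (zero_le_one) (by ring : γ + (1 - γ) = 1)
      simpa using this
    have hhigh : u ≤ 1 + ε m / (1 - γ) := by
      have h3 : (1 - γ) * u ≤ (1 - γ) + ε m := by nlinarith
      have h4 : ε m / (1 - γ) * (1 - γ) = ε m := div_mul_cancel₀ _ hne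
      nlinarith [h3, h4, h1γ]
    refine ⟨⟨by rw [hgoalu]; exact hlow, by rw [hgoalu]; exact hhigh⟩, ?_⟩
    -- bound on ε
    have hk : (kstar θ β m : ℝ) ≤ θ * (m:ℝ) ^ β := by
      apply Nat.floor_le
      positivity
    have hAval : A = (σ * c) ^ p * ((m:ℝ) ^ ((1:ℝ)/2 - γ)) ^ p * (|Δ m| ^ p)⁻¹ := by
      have h0 : (0:ℝ) ≤ (m:ℝ) ^ ((1:ℝ)/2 - γ) := (Real.rpow_pos_of_pos hmpos _).le
      rw [hA, hrm]
      rw [Real.mul_rpow (mul_nonneg (by positivity) h0) (inv_nonneg.mpr hΔ.le)]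
      rw [Real.mul_rpow (by positivity : (0:ℝ) ≤ σ * c) h0]
      rw [Real.inv_rpow hΔ.le]
    have hsm : s m = (m:ℝ) ^ e * |Δ m| := rfl
    have heq : θ * (m:ℝ) ^ β / A = C * (s m) ^ p := by
      rw [hAval, hC, hsm]
      rw [Real.mul_rpow (Real.rpow_nonneg hmpos.le _) hΔ.le,
        ← Real.rpow_mul hmpos.le, ← Real.rpow_mul hmpos.le]
      have hexp : e * p = β - ((1:ℝ)/2 - γ) * p := by
        rw [he, hp]; field_simp; ring
      rw [hexp, Real.rpow_sub hmpos]
      have h1 : (0:ℝ) < (σ * c) ^ p := Real.rpow_pos_of_pos (by positivity) p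
      have h2 : (0:ℝ) < (m:ℝ) ^ (((1:ℝ)/2 - γ) * p) := Real.rpow_pos_of_pos hmpos _
      have h3 : (0:ℝ) < (m:ℝ) ^ β := Real.rpow_pos_of_pos hmpos _
      have h4 : (0:ℝ) < |Δ m| ^ p := Real.rpow_pos_of_pos hΔ _
      field_simp [h1.ne', h2.ne', h3.ne', h4.ne']
    have hεm : ε m = (kstar θ β m : ℝ) / A := by rw [hA]
    calc ε m = (kstar θ β m : ℝ) / A := hεm
      _ ≤ θ * (m:ℝ) ^ β / A := by gcongr
      _ = C * (s m) ^ p := heq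
  -- ε → 0
  have hsp : Tendsto (fun m => C * (s m) ^ p) atTop (𝓝 0) := by
    have h1 : Tendsto (fun m => (s m) ^ p) atTop (𝓝 ((0:ℝ) ^ p)) :=
      hcaseI.rpow_const (Or.inr hp0.le)
    rw [Real.zero_rpow hp0.ne'] at h1
    have := h1.const_mul C
    simpa using this
  have hεlim : Tendsto ε atTop (𝓝 0) := by
    apply squeeze_zero' (Eventually.of_forall hεnonneg) _ hsp
    filter_upwards [eventually_ge_atTop 1] with m hm
    exact (hmain m hm).2
  -- conclude by squeezing
  have hupper : Tendsto (fun m => 1 + ε m / (1 - γ)) atTop (𝓝 1) := by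
    have := (hεlim.div_const (1 - γ)).const_add 1
    simpa using this
  refine tendsto_of_tendsto_of_tendsto_of_le_of_le' tendsto_const_nhds hupper ?_ ?_
  · filter_upwards [eventually_ge_atTop 1] with m hm
    exact (hmain m hm).1.1
  · filter_upwards [eventually_ge_atTop 1] with m hm
    exact (hmain m hm).1.2


end
end

section
/- Under assumptions (A3)–(A5) and Case (II), i.e. m^{β(1−γ)−1/2+γ}·|Δ_m| → C̃₁ for some C̃₁ ∈ (0,∞), set C₁ = θ^{1−γ}·C̃₁, let d₁ ∈ (0,1) be the unique solution of d₁ = 1 − (cσ/C₁)·d₁^{1−γ}, and set d₂ = (σc/C₁ + d₁^γ)^{1/(1−γ)}. Then a_m(c) = d₂·k*_m·(1 + o(1)), i.e. a_m(c)/(d₂·k*_m) → 1 as m → ∞. -/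
open MeasureTheory ProbabilityTheory Filter Finset Real Topology

noncomputable section

/-- Auxiliary function `g(x) = x^(1-γ) - x^(-γ)` used in the proof of
Proposition A.1, Case (II). -/
private noncomputable def gauxCaseII (γ x : ℝ) : ℝ := x ^ (1 - γ) - x ^ (-γ)

private lemma gauxCaseII_mul_rpow {γ T : ℝ} (hT : 0 < T) :
    gauxCaseII γ T * T ^ γ = T - 1 := by
  unfold gauxCaseII
  rw [sub_mul, ← Real.rpow_add hT, ← Real.rpow_add hT,
    show (1 - γ) + γ = 1 by ring, show -γ + γ = 0 by ring,
    Real.rpow_one, Real.rpow_zero]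

private lemma gauxCaseII_strictMonoOn {γ : ℝ} (hγ0 : 0 ≤ γ) (hγ1 : γ < 1) :
    StrictMonoOn (gauxCaseII γ) (Set.Ioi 0) := by
  intro s hs t ht hst
  have h1 : s ^ (1 - γ) < t ^ (1 - γ) :=
    Real.rpow_lt_rpow (le_of_lt hs) hst (by linarith)
  have h2 : t ^ (-γ) ≤ s ^ (-γ) :=
    Real.rpow_le_rpow_of_nonpos hs hst.le (by linarith)
  unfold gauxCaseII
  linarith

private lemma gauxCaseII_fixed {γ A K L : ℝ} (hA : 0 < A) (hK : 0 < K)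
    (heq : A = L * A ^ γ + K) :
    gauxCaseII γ (A / K) = L * K ^ (γ - 1) := by
  have hT : 0 < A / K := div_pos hA hK
  have hTγ : (0:ℝ) < (A / K) ^ γ := Real.rpow_pos_of_pos hT γ
  refine mul_right_cancel₀ hTγ.ne' ?_
  rw [gauxCaseII_mul_rpow hT, Real.div_rpow hA.le hK.le, Real.rpow_sub hK, Real.rpow_one]
  have hKγ : (0:ℝ) < K ^ γ := Real.rpow_pos_of_pos hK γ
  field_simp
  linear_combination heq

/-- Proposition A.1, Case (II): `a_m(c) ≈ d₂ k*_m`. -/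
theorem aseq_asymptotics_caseII
    (σ c θ β γ : ℝ) (Δ : ℕ → ℝ) (a : ℕ → ℝ)
    (hγ : γ ∈ Set.Ico (0 : ℝ) (1 / 2)) (hσ : 0 < σ) (hc : 0 < c) (hθ : 0 < θ)
    (hβ : β ∈ Set.Ico (0 : ℝ) 1)
    (hΔne : ∀ m : ℕ, Δ m ≠ 0)
    (hA4 : Tendsto (fun m : ℕ => Real.sqrt m * |Δ m|) atTop atTop)
    (hA5 : ∃ M : ℝ, ∀ m : ℕ, |Δ m| ≤ M)
    (ha : ∀ m : ℕ, 0 < a m ∧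
      a m = σ * c * (m : ℝ) ^ ((1 : ℝ) / 2 - γ) * |Δ m|⁻¹ * a m ^ γ + (kstar θ β m : ℝ))
    (Ct1 : ℝ) (hCt1 : 0 < Ct1)
    (hcaseII : Tendsto (fun m : ℕ => (m : ℝ) ^ (β * (1 - γ) - 1 / 2 + γ) * |Δ m|) atTop (𝓝 Ct1))
    (C1 : ℝ) (hC1 : C1 = θ ^ (1 - γ) * Ct1)
    (d1 : ℝ) (hd1 : d1 ∈ Set.Ioo (0 : ℝ) 1)
    (hd1eq : d1 = 1 - c * σ / C1 * d1 ^ (1 - γ))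
    (d2 : ℝ) (hd2 : d2 = (σ * c / C1 + d1 ^ γ) ^ ((1 : ℝ) / (1 - γ))) :
    Tendsto (fun m : ℕ => a m / (d2 * (kstar θ β m : ℝ))) atTop (𝓝 1) := by
  obtain ⟨hγ0, hγh⟩ := hγ
  obtain ⟨hβ0, hβ1⟩ := hβ
  obtain ⟨hd1pos, hd1lt⟩ := hd1
  have hγ1 : γ < 1 := by linarith
  have h1γ : (0:ℝ) < 1 - γ := by linarith
  have hC1pos : 0 < C1 := by
    rw [hC1]; exact mul_pos (Real.rpow_pos_of_pos hθ _) hCt1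
  set r : ℝ := σ * c / C1 with hr
  have hrpos : 0 < r := by positivity
  -- fixed point facts for d2
  have hd1ne := hd1pos.ne'
  have hd1γpos : 0 < d1 ^ γ := Real.rpow_pos_of_pos hd1pos γ
  have key : r * d1 ^ (1 - γ) = 1 - d1 := by
    have h : c * σ / C1 = r := by rw [hr]; ring
    rw [h] at hd1eq; linarith
  have hsplit : d1 ^ (1 - γ) = d1 * (d1 ^ γ)⁻¹ := by
    rw [show (1 - γ) = 1 + (-γ) by ring, Real.rpow_add hd1pos, Real.rpow_one,
      Real.rpow_neg hd1pos.le]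
  rw [hsplit] at key
  have key2 : r * d1 = (1 - d1) * d1 ^ γ := by
    field_simp at key
    linarith
  have h2 : d1 ^ (γ - 1) * d1 = d1 ^ γ := by
    rw [← Real.rpow_add_one hd1ne (γ - 1), show γ - 1 + 1 = γ by ring]
  have hsum : (r + d1 ^ γ) * d1 = d1 ^ (γ - 1) * d1 := by
    rw [h2]; linear_combination key2
  have hbase : r + d1 ^ γ = d1 ^ (γ - 1) := mul_right_cancel₀ hd1ne hsum
  have hd2inv : d2 = d1⁻¹ := by
    rw [hd2, hbase, ← Real.rpow_mul hd1pos.le,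
      show (γ - 1) * ((1:ℝ) / (1 - γ)) = -1 by field_simp; ring,
      Real.rpow_neg_one]
  have hd2gt1 : 1 < d2 := by
    rw [hd2inv]; exact one_lt_inv_iff₀.2 ⟨hd1pos, hd1lt⟩
  have hd2pos : 0 < d2 := lt_trans one_pos hd2gt1
  have hd2γ : d2 ^ γ = (d1 ^ γ)⁻¹ := by
    rw [hd2inv, Real.inv_rpow hd1pos.le]
  have hd2fix : d2 = 1 + r * d2 ^ γ := by
    rw [hd2γ, hd2inv]
    field_simp
    linear_combination -key2
  -- g d2 = r
  have hgfix : gauxCaseII γ d2 = r := by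
    have hd2γpos : (0:ℝ) < d2 ^ γ := Real.rpow_pos_of_pos hd2pos γ
    refine mul_right_cancel₀ hd2γpos.ne' ?_
    rw [gauxCaseII_mul_rpow hd2pos]
    linarith [hd2fix]
  -- β > 0
  have hβpos : 0 < β := by
    rcases hβ0.lt_or_eq with h | h
    · exact h
    · exfalso
      obtain ⟨M, hM⟩ := hA5
      have he : β * (1 - γ) - 1/2 + γ = -(1/2 - γ) := by rw [← h]; ring
      have h0 : Tendsto (fun m : ℕ => (m:ℝ) ^ (β * (1 - γ) - 1/2 + γ) * M) atTop (𝓝 0) := by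
        have hcomp := (tendsto_rpow_neg_atTop (by linarith : (0:ℝ) < 1/2 - γ)).comp
          tendsto_natCast_atTop_atTop
        have h2' := hcomp.mul_const M
        rw [zero_mul] at h2'
        refine h2'.congr fun m => ?_
        simp only [Function.comp_apply, he]
      have h1 : Tendsto (fun m : ℕ => (m : ℝ) ^ (β * (1 - γ) - 1 / 2 + γ) * |Δ m|)
          atTop (𝓝 0) := by
        refine squeeze_zero (fun m => by positivity) (fun m => ?_) h0
        exact mul_le_mul_of_nonneg_left (hM m) (by positivity)
      exact absurd (tendsto_nhds_unique hcaseII h1) hCt1.ne'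
  have hφ : Tendsto (fun m : ℕ => θ * (m:ℝ) ^ β) atTop atTop :=
    ((tendsto_rpow_atTop hβpos).comp tendsto_natCast_atTop_atTop).const_mul_atTop hθ
  have hratio : Tendsto (fun m : ℕ => (kstar θ β m : ℝ) / (θ * (m:ℝ) ^ β)) atTop (𝓝 1) :=
    tendsto_nat_floor_div_atTop.comp hφ
  have hk1 : ∀ᶠ m : ℕ in atTop, 1 ≤ kstar θ β m :=
    (tendsto_nat_floor_atTop.comp hφ).eventually_ge_atTop 1
  -- the sequence ε m and its limit
  set ε : ℕ → ℝ := fun m => σ * c * (m : ℝ) ^ ((1 : ℝ) / 2 - γ) * |Δ m|⁻¹ *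
      (kstar θ β m : ℝ) ^ (γ - 1) with hεdef
  have hεlim : Tendsto ε atTop (𝓝 r) := by
    have hF : Tendsto (fun m : ℕ => σ * c * (((m : ℝ) ^ (β * (1 - γ) - 1 / 2 + γ) * |Δ m|)⁻¹ *
        ((kstar θ β m : ℝ) / (θ * (m:ℝ) ^ β)) ^ (γ - 1) * θ ^ (γ - 1))) atTop
        (𝓝 (σ * c * (Ct1⁻¹ * (1:ℝ) ^ (γ - 1) * θ ^ (γ - 1)))) :=
      (((hcaseII.inv₀ hCt1.ne').mul (hratio.rpow_const (Or.inl one_ne_zero))).mul_const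
        (θ ^ (γ - 1))).const_mul (σ * c)
    have hval : σ * c * (Ct1⁻¹ * (1:ℝ) ^ (γ - 1) * θ ^ (γ - 1)) = r := by
      rw [Real.one_rpow, hr, hC1, show γ - 1 = -(1 - γ) by ring, Real.rpow_neg hθ.le]
      have := (Real.rpow_pos_of_pos hθ (1 - γ)).ne'
      field_simp
    rw [hval] at hF
    refine hF.congr' ?_
    filter_upwards [hk1, eventually_ge_atTop 1] with m hkm hm1
    have hm0 : (0:ℝ) < (m:ℝ) := by exact_mod_cast hm1
    have hK0 : (0:ℝ) < (kstar θ β m : ℝ) := by exact_mod_cast hkm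
    have hΔ0 : 0 < |Δ m| := abs_pos.2 (hΔne m)
    have hmb : (0:ℝ) < (m:ℝ) ^ β := Real.rpow_pos_of_pos hm0 β
    have hθγ : (0:ℝ) < θ ^ (γ - 1) := Real.rpow_pos_of_pos hθ _
    rw [hεdef]
    simp only
    rw [Real.div_rpow hK0.le (by positivity), Real.mul_rpow hθ.le hmb.le,
      ← Real.rpow_mul hm0.le]
    have hm12 : (m:ℝ) ^ ((1:ℝ)/2 - γ) =
        ((m:ℝ) ^ (β * (1 - γ) - 1/2 + γ))⁻¹ * ((m:ℝ) ^ (β * (γ - 1)))⁻¹ := by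
      rw [← mul_inv, ← Real.rpow_add hm0, ← Real.rpow_neg hm0.le,
        show -(β * (1 - γ) - 1/2 + γ + β * (γ - 1)) = 1/2 - γ by ring]
    rw [hm12]
    have h1' : ((m:ℝ) ^ (β * (1 - γ) - 1/2 + γ)) ≠ 0 := (Real.rpow_pos_of_pos hm0 _).ne'
    have h2' : ((m:ℝ) ^ (β * (γ - 1))) ≠ 0 := (Real.rpow_pos_of_pos hm0 _).ne'
    field_simp
  -- the ratio t m = a m / k*_m satisfies g (t m) = ε m eventually
  set t : ℕ → ℝ := fun m => a m / (kstar θ β m : ℝ) with htdef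
  have hge : ∀ᶠ m : ℕ in atTop, gauxCaseII γ (t m) = ε m ∧ 0 < t m := by
    filter_upwards [hk1] with m hkm
    have hK0 : (0:ℝ) < (kstar θ β m : ℝ) := by exact_mod_cast hkm
    obtain ⟨hA, heq⟩ := ha m
    refine ⟨?_, div_pos hA hK0⟩
    exact gauxCaseII_fixed hA hK0 heq
  -- t m → d2
  have htlim : Tendsto t atTop (𝓝 d2) := by
    refine tendsto_order.2 ⟨fun l hl => ?_, fun u hu => ?_⟩
    · set l' := max l 1 with hl'
      have hl'lt : l' < d2 := max_lt hl hd2gt1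
      have hl'pos : (0:ℝ) < l' := lt_of_lt_of_le one_pos (le_max_right l 1)
      have hgl : gauxCaseII γ l' < r := by
        have := gauxCaseII_strictMonoOn hγ0 hγ1 (Set.mem_Ioi.2 hl'pos)
          (Set.mem_Ioi.2 hd2pos) hl'lt
        rwa [hgfix] at this
      filter_upwards [hge, hεlim.eventually_const_lt hgl] with m hm hεm
      obtain ⟨hgm, htm⟩ := hm
      by_contra h
      push_neg at h
      have h1 : t m ≤ l' := le_trans h (le_max_left l 1)
      have h2 : gauxCaseII γ (t m) ≤ gauxCaseII γ l' :=
        (gauxCaseII_strictMonoOn hγ0 hγ1).monotoneOn (Set.mem_Ioi.2 htm)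
          (Set.mem_Ioi.2 hl'pos) h1
      rw [hgm] at h2
      linarith
    · have hgu : r < gauxCaseII γ u := by
        have := gauxCaseII_strictMonoOn hγ0 hγ1 (Set.mem_Ioi.2 hd2pos)
          (Set.mem_Ioi.2 (lt_trans hd2pos hu)) hu
        rwa [hgfix] at this
      filter_upwards [hge, hεlim.eventually_lt_const hgu] with m hm hεm
      obtain ⟨hgm, htm⟩ := hm
      by_contra h
      push_neg at h
      have h2 : gauxCaseII γ u ≤ gauxCaseII γ (t m) :=
        (gauxCaseII_strictMonoOn hγ0 hγ1).monotoneOn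
          (Set.mem_Ioi.2 (lt_trans hd2pos hu)) (Set.mem_Ioi.2 htm) h
      rw [hgm] at h2
      linarith
  -- conclude
  have hfinal : Tendsto (fun m => t m / d2) atTop (𝓝 (d2 / d2)) := htlim.div_const d2
  rw [div_self hd2pos.ne'] at hfinal
  refine hfinal.congr fun m => ?_
  rw [htdef]
  simp only
  rw [div_div, mul_comm]


end
end

section
/- Under assumptions (A3)–(A5) and γ ∈ [0,1/2), the normalizing sequence satisfies a_m(c)/m → 0 as m → ∞. -/
open MeasureTheory ProbabilityTheory Filter Finset Real Topology

noncomputable section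

/-- Lemma A.1 a) (i): `a_m(c)/m → 0`. -/
theorem aseq_div_m_tendsto_zero
    (σ c θ β γ : ℝ) (Δ : ℕ → ℝ) (a : ℕ → ℝ)
    (hγ : γ ∈ Set.Ico (0 : ℝ) (1 / 2)) (hσ : 0 < σ) (hc : 0 < c) (hθ : 0 < θ)
    (hβ : β ∈ Set.Ico (0 : ℝ) 1)
    (hΔne : ∀ m : ℕ, Δ m ≠ 0)
    (hA4 : Tendsto (fun m : ℕ => Real.sqrt m * |Δ m|) atTop atTop)
    (hA5 : ∃ M : ℝ, ∀ m : ℕ, |Δ m| ≤ M)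
    (ha : ∀ m : ℕ, 0 < a m ∧
      a m = σ * c * (m : ℝ) ^ ((1 : ℝ) / 2 - γ) * |Δ m|⁻¹ * a m ^ γ + (kstar θ β m : ℝ))
    :
    Tendsto (fun m : ℕ => a m / m) atTop (𝓝 0) := by
  obtain ⟨hγ0, hγhalf⟩ := hγ
  rw [Metric.tendsto_atTop]
  intro ε hε
  have hεpow : 0 < ε ^ (γ - 1) := Real.rpow_pos_of_pos hε _
  have h1 : ∀ᶠ m : ℕ in atTop, 2 * (σ * c * ε ^ (γ - 1)) ≤ Real.sqrt m * |Δ m| :=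
    hA4.eventually_ge_atTop _
  have h2 : ∀ᶠ m : ℕ in atTop, θ * (m : ℝ) ^ (β - 1) < ε / 2 := by
    have ht : Tendsto (fun m : ℕ => θ * (m : ℝ) ^ (β - 1)) atTop (𝓝 (θ * 0)) := by
      refine Tendsto.const_mul θ ?_
      have := (tendsto_rpow_neg_atTop (y := 1 - β) (by linarith [hβ.2])).comp
        (tendsto_natCast_atTop_atTop (R := ℝ))
      simpa [Function.comp_def, neg_sub] using this
    rw [mul_zero] at ht
    exact ht.eventually (eventually_lt_nhds (by positivity : (0:ℝ) < ε / 2))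
  have h3 : ∀ᶠ m : ℕ in atTop, 1 ≤ m := eventually_ge_atTop 1
  rw [eventually_atTop] at h1 h2 h3
  obtain ⟨N1, hN1⟩ := h1
  obtain ⟨N2, hN2⟩ := h2
  obtain ⟨N3, hN3⟩ := h3
  refine ⟨max N1 (max N2 N3), fun m hm => ?_⟩
  have hm1 := hN1 m (le_trans (le_max_left _ _) hm)
  have hm2 := hN2 m (le_trans (le_trans (le_max_left _ _) (le_max_right _ _)) hm)
  have hm3 := hN3 m (le_trans (le_trans (le_max_right _ _) (le_max_right _ _)) hm)
  have hM : (0 : ℝ) < m := by exact_mod_cast hm3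
  obtain ⟨haP, haE⟩ := ha m
  have hΔpos : 0 < |Δ m| := abs_pos.mpr (hΔne m)
  have hsqpos : 0 < Real.sqrt m := Real.sqrt_pos.mpr hM
  have hstep : a m < ε * m := by
    by_contra h
    push_neg at h
    have hεm : (0 : ℝ) < ε * m := by positivity
    have hpow : a m ^ γ ≤ (ε * m) ^ (γ - 1) * a m := by
      have h1' : a m ^ γ = a m ^ (γ - 1) * a m := by
        rw [← Real.rpow_add_one (ne_of_gt haP)]; ring_nf
      rw [h1']
      exact mul_le_mul_of_nonneg_right
        (Real.rpow_le_rpow_of_nonpos hεm h (by linarith)) haP.le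
    have hmm : (m : ℝ) ^ ((1 : ℝ) / 2 - γ) * (m : ℝ) ^ (γ - 1) = (Real.sqrt m)⁻¹ := by
      rw [← Real.rpow_add hM, Real.sqrt_eq_rpow, ← Real.rpow_neg hM.le]
      congr 1; ring
    have hcoef : σ * c * (m : ℝ) ^ ((1 : ℝ) / 2 - γ) * |Δ m|⁻¹ * ((ε * m) ^ (γ - 1)) =
        σ * c * ε ^ (γ - 1) / (Real.sqrt m * |Δ m|) := by
      rw [Real.mul_rpow hε.le hM.le]
      have : σ * c * (m : ℝ) ^ ((1 : ℝ) / 2 - γ) * |Δ m|⁻¹ *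
          (ε ^ (γ - 1) * (m : ℝ) ^ (γ - 1)) =
          σ * c * ε ^ (γ - 1) * (((m : ℝ) ^ ((1 : ℝ) / 2 - γ) * (m : ℝ) ^ (γ - 1)) * |Δ m|⁻¹) := by
        ring
      rw [this, hmm, division_def, mul_inv]
    have hhalf : σ * c * ε ^ (γ - 1) / (Real.sqrt m * |Δ m|) ≤ 1 / 2 := by
      rw [div_le_iff₀ (by positivity)]
      linarith
    have hBpos : 0 ≤ σ * c * (m : ℝ) ^ ((1 : ℝ) / 2 - γ) * |Δ m|⁻¹ := by positivity
    have hterm : σ * c * (m : ℝ) ^ ((1 : ℝ) / 2 - γ) * |Δ m|⁻¹ * a m ^ γ ≤ a m / 2 := by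
      calc σ * c * (m : ℝ) ^ ((1 : ℝ) / 2 - γ) * |Δ m|⁻¹ * a m ^ γ
          ≤ σ * c * (m : ℝ) ^ ((1 : ℝ) / 2 - γ) * |Δ m|⁻¹ * ((ε * m) ^ (γ - 1) * a m) :=
            mul_le_mul_of_nonneg_left hpow hBpos
        _ = (σ * c * (m : ℝ) ^ ((1 : ℝ) / 2 - γ) * |Δ m|⁻¹ * ((ε * m) ^ (γ - 1))) * a m := by
            ring
        _ = (σ * c * ε ^ (γ - 1) / (Real.sqrt m * |Δ m|)) * a m := by rw [hcoef]
        _ ≤ (1 / 2) * a m := mul_le_mul_of_nonneg_right hhalf haP.le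
        _ = a m / 2 := by ring
    have hk : (kstar θ β m : ℝ) < ε / 2 * m := by
      have hfl : (kstar θ β m : ℝ) ≤ θ * (m : ℝ) ^ β :=
        Nat.floor_le (by positivity)
      have hβm : θ * (m : ℝ) ^ β = θ * (m : ℝ) ^ (β - 1) * m := by
        rw [mul_assoc, ← Real.rpow_add_one (ne_of_gt hM)]; ring_nf
      have : θ * (m : ℝ) ^ (β - 1) * m < ε / 2 * m :=
        mul_lt_mul_of_pos_right hm2 hM
      linarith [hβm ▸ hfl]
    have : a m < a m := by
      calc a m = σ * c * (m : ℝ) ^ ((1 : ℝ) / 2 - γ) * |Δ m|⁻¹ * a m ^ γ +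
          (kstar θ β m : ℝ) := haE
        _ < a m / 2 + ε / 2 * m := by linarith
        _ ≤ a m / 2 + a m / 2 := by linarith
        _ = a m := by ring
    exact absurd this (lt_irrefl _)
  rw [Real.dist_eq, sub_zero, abs_of_pos (by positivity)]
  rw [div_lt_iff₀ hM]
  linarith

end
end

section
/- Under assumptions (A3)–(A5) and γ ∈ [0,1/2), the normalizing sequence satisfies √(a_m(c))·|Δ_m| → ∞ as m → ∞. -/
open MeasureTheory ProbabilityTheory Filter Finset Real Topology

noncomputable section

/-- Lemma A.1 a) (ii): `√(a_m(c)) |Δ_m| → ∞`. -/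
theorem sqrt_aseq_mul_delta_tendsto_top
    (σ c θ β γ : ℝ) (Δ : ℕ → ℝ) (a : ℕ → ℝ)
    (hγ : γ ∈ Set.Ico (0 : ℝ) (1 / 2)) (hσ : 0 < σ) (hc : 0 < c) (hθ : 0 < θ)
    (hβ : β ∈ Set.Ico (0 : ℝ) 1)
    (hΔne : ∀ m : ℕ, Δ m ≠ 0)
    (hA4 : Tendsto (fun m : ℕ => Real.sqrt m * |Δ m|) atTop atTop)
    (hA5 : ∃ M : ℝ, ∀ m : ℕ, |Δ m| ≤ M)
    (ha : ∀ m : ℕ, 0 < a m ∧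
      a m = σ * c * (m : ℝ) ^ ((1 : ℝ) / 2 - γ) * |Δ m|⁻¹ * a m ^ γ + (kstar θ β m : ℝ))
    :
    Tendsto (fun m : ℕ => Real.sqrt (a m) * |Δ m|) atTop atTop := by
  obtain ⟨hγ0, hγhalf⟩ := hγ
  have h1γ : 0 < 1 - γ := by linarith
  have hq0 : 0 < 1 / (2 * (1 - γ)) := by positivity
  set q : ℝ := 1 / (2 * (1 - γ)) with hq
  set p : ℝ := (1 - 2 * γ) * q with hp
  have hp0 : 0 < p := by
    have h2γ : 0 < 1 - 2 * γ := by linarith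
    positivity
  have hσc : 0 < σ * c := mul_pos hσ hc
  have hg : Tendsto (fun t : ℝ => (σ * c) ^ q * t ^ p) atTop atTop :=
    (tendsto_rpow_atTop hp0).const_mul_atTop (Real.rpow_pos_of_pos hσc q)
  apply tendsto_atTop_mono' atTop _ (hg.comp hA4)
  filter_upwards [eventually_ge_atTop 1] with m hm
  have hD : 0 < |Δ m| := abs_pos.mpr (hΔne m)
  have hM0 : (0 : ℝ) < m := by exact_mod_cast hm
  obtain ⟨hA0, hEq⟩ := ha m
  set s : ℝ := (1 : ℝ) / 2 - γ with hs
  have hK0 : 0 < σ * c * (m : ℝ) ^ s / |Δ m| := by positivity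
  have hAγ : 0 < a m ^ γ := Real.rpow_pos_of_pos hA0 γ
  have h1 : σ * c * (m : ℝ) ^ s / |Δ m| * a m ^ γ ≤ a m := by
    have hk : (0 : ℝ) ≤ (kstar θ β m : ℝ) := Nat.cast_nonneg _
    rw [div_eq_mul_inv]
    linarith [hEq.ge]
  have h2 : σ * c * (m : ℝ) ^ s / |Δ m| ≤ a m ^ (1 - γ) := by
    have hsum : a m ^ (1 - γ) * a m ^ γ = a m := by
      rw [← Real.rpow_add hA0]; norm_num
    rw [← mul_le_mul_iff_of_pos_right hAγ, hsum]
    exact h1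
  have h3 : (σ * c * (m : ℝ) ^ s / |Δ m|) ^ ((1 : ℝ) / (1 - γ)) ≤ a m := by
    have h := Real.rpow_le_rpow hK0.le h2 (by positivity : (0 : ℝ) ≤ 1 / (1 - γ))
    rwa [← Real.rpow_mul hA0.le, mul_one_div, div_self h1γ.ne', Real.rpow_one] at h
  have h4 : (σ * c * (m : ℝ) ^ s / |Δ m|) ^ q ≤ Real.sqrt (a m) := by
    rw [Real.sqrt_eq_rpow]
    have h := Real.rpow_le_rpow (Real.rpow_nonneg hK0.le _) h3
      (by norm_num : (0 : ℝ) ≤ 1 / 2)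
    rwa [← Real.rpow_mul hK0.le, show (1 : ℝ) / (1 - γ) * (1 / 2) = q by
      rw [hq]; field_simp] at h
  have key : (σ * c) ^ q * (Real.sqrt m * |Δ m|) ^ p
      = (σ * c * (m : ℝ) ^ s / |Δ m|) ^ q * |Δ m| := by
    rw [Real.mul_rpow (Real.sqrt_nonneg _) hD.le, Real.div_rpow (by positivity) hD.le,
      Real.mul_rpow (by positivity) (Real.rpow_nonneg hM0.le _),
      Real.sqrt_eq_rpow, ← Real.rpow_mul hM0.le, ← Real.rpow_mul hM0.le,
      (show 1 / 2 * p = s * q by rw [hp, hq, hs]; field_simp; try ring),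
      (show p = 1 - q by rw [hp, hq]; field_simp; try ring),
      Real.rpow_sub hD, Real.rpow_one]
    field_simp
  calc (σ * c) ^ q * (Real.sqrt m * |Δ m|) ^ p
      = (σ * c * (m : ℝ) ^ s / |Δ m|) ^ q * |Δ m| := key
    _ ≤ Real.sqrt (a m) * |Δ m| := by
        exact mul_le_mul_of_nonneg_right h4 hD.le


end
end

section
/- Under assumptions (A3)–(A5) and γ ∈ [0,1/2), the ratio k*_m/a_m(c) converges as m → ∞, with limit: 0 under Case (I) (m^{β(1−γ)−1/2+γ}|Δ_m| → 0); d₁ ∈ (0,1) under Case (II) (m^{β(1−γ)−1/2+γ}|Δ_m| → C̃₁ ∈ (0,∞)), where d₁ is the unique solution in (0,1) of d₁ = 1 − (cσ/C₁)·d₁^{1−γ} with C₁ = θ^{1−γ}·C̃₁; and 1 under Case (III) (m^{β(1−γ)−1/2+γ}|Δ_m| → ∞). -/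
open MeasureTheory ProbabilityTheory Filter Finset Real Topology

noncomputable section

private lemma aux_mpow_atTop {β : ℝ} (hβ : 0 < β) :
    Tendsto (fun m : ℕ => (m : ℝ) ^ β) atTop atTop :=
  (tendsto_rpow_atTop hβ).comp tendsto_natCast_atTop_atTop

private lemma aux_kstar_atTop {θ β : ℝ} (hθ : 0 < θ) (hβ : 0 < β) :
    Tendsto (fun m : ℕ => (kstar θ β m : ℝ)) atTop atTop := by
  apply tendsto_atTop_mono' atTop (f₁ := fun m : ℕ => θ * (m : ℝ) ^ β - 1)
  · filter_upwards with m
    have h := Nat.lt_floor_add_one (θ * (m : ℝ) ^ β)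
    unfold kstar
    linarith
  · exact tendsto_atTop_add_const_right _ _ ((aux_mpow_atTop hβ).const_mul_atTop hθ)

private lemma aux_kstar_div (θ β : ℝ) (hθ : 0 < θ) (hβ : 0 < β) :
    Tendsto (fun m : ℕ => (kstar θ β m : ℝ) / (m : ℝ) ^ β) atTop (𝓝 θ) := by
  have hinv : Tendsto (fun m : ℕ => θ - ((m : ℝ) ^ β)⁻¹) atTop (𝓝 θ) := by
    have := (aux_mpow_atTop hβ).inv_tendsto_atTop
    simpa using tendsto_const_nhds.sub this
  apply tendsto_of_tendsto_of_tendsto_of_le_of_le' hinv tendsto_const_nhds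
  · filter_upwards [eventually_ge_atTop 1] with m hm
    have hmpos : (0 : ℝ) < (m : ℝ) ^ β := Real.rpow_pos_of_pos (by exact_mod_cast hm) β
    have h := Nat.lt_floor_add_one (θ * (m : ℝ) ^ β)
    rw [le_div_iff₀ hmpos]
    unfold kstar
    have h2 : (θ - ((m:ℝ)^β)⁻¹) * (m:ℝ)^β = θ * (m:ℝ)^β - 1 := by
      field_simp
    rw [h2]
    linarith
  · filter_upwards [eventually_ge_atTop 1] with m hm
    have hmpos : (0 : ℝ) < (m : ℝ) ^ β := Real.rpow_pos_of_pos (by exact_mod_cast hm) β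
    rw [div_le_iff₀ hmpos]
    exact Nat.floor_le (by positivity)

set_option maxHeartbeats 1000000 in
/-- Lemma A.1 a) (iv): the limit of `k*_m/a_m(c)` in the three cases (I), (II), (III). -/
theorem kstar_div_aseq_limits
    (σ c θ β γ : ℝ) (Δ : ℕ → ℝ) (a : ℕ → ℝ)
    (hγ : γ ∈ Set.Ico (0 : ℝ) (1 / 2)) (hσ : 0 < σ) (hc : 0 < c) (hθ : 0 < θ)
    (hβ : β ∈ Set.Ico (0 : ℝ) 1)
    (hΔne : ∀ m : ℕ, Δ m ≠ 0)
    (hA4 : Tendsto (fun m : ℕ => Real.sqrt m * |Δ m|) atTop atTop)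
    (hA5 : ∃ M : ℝ, ∀ m : ℕ, |Δ m| ≤ M)
    (ha : ∀ m : ℕ, 0 < a m ∧
      a m = σ * c * (m : ℝ) ^ ((1 : ℝ) / 2 - γ) * |Δ m|⁻¹ * a m ^ γ + (kstar θ β m : ℝ))
    :
    (Tendsto (fun m : ℕ => (m : ℝ) ^ (β * (1 - γ) - 1 / 2 + γ) * |Δ m|) atTop (𝓝 0) →
      Tendsto (fun m : ℕ => (kstar θ β m : ℝ) / a m) atTop (𝓝 0)) ∧
    (∀ Ct1 : ℝ, 0 < Ct1 →
      Tendsto (fun m : ℕ => (m : ℝ) ^ (β * (1 - γ) - 1 / 2 + γ) * |Δ m|) atTop (𝓝 Ct1) →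
      ∀ d1 : ℝ, d1 ∈ Set.Ioo (0 : ℝ) 1 →
        d1 = 1 - c * σ / (θ ^ (1 - γ) * Ct1) * d1 ^ (1 - γ) →
        Tendsto (fun m : ℕ => (kstar θ β m : ℝ) / a m) atTop (𝓝 d1)) ∧
    (Tendsto (fun m : ℕ => (m : ℝ) ^ (β * (1 - γ) - 1 / 2 + γ) * |Δ m|) atTop atTop →
      Tendsto (fun m : ℕ => (kstar θ β m : ℝ) / a m) atTop (𝓝 1)) := by
  obtain ⟨hγ0, hγ2⟩ := hγ
  obtain ⟨hβ0, hβ1⟩ := hβ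
  obtain ⟨M, hM⟩ := hA5
  have h1γ : 0 < 1 - γ := by linarith
  have h12γ : 0 < (1 : ℝ) / 2 - γ := by linarith
  have hΔpos : ∀ m, 0 < |Δ m| := fun m => abs_pos.mpr (hΔne m)
  have hapos : ∀ m, 0 < a m := fun m => (ha m).1
  have haeq : ∀ m, a m = σ * c * (m : ℝ) ^ ((1 : ℝ) / 2 - γ) * |Δ m|⁻¹ * a m ^ γ +
      (kstar θ β m : ℝ) := fun m => (ha m).2
  have hK0 : ∀ m : ℕ, (0 : ℝ) ≤ (kstar θ β m : ℝ) := fun m => Nat.cast_nonneg _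
  have hKle : ∀ m : ℕ, (kstar θ β m : ℝ) ≤ a m := by
    intro m
    have h1 : 0 ≤ σ * c * (m : ℝ) ^ ((1 : ℝ) / 2 - γ) * |Δ m|⁻¹ * a m ^ γ :=
      mul_nonneg (mul_nonneg (mul_nonneg (mul_nonneg hσ.le hc.le)
        (Real.rpow_nonneg (Nat.cast_nonneg m) _)) (inv_nonneg.mpr (abs_nonneg _)))
        (Real.rpow_pos_of_pos ((ha m).1) γ).le
    linarith [haeq m]
  have hr0 : ∀ m : ℕ, 0 ≤ (kstar θ β m : ℝ) / a m :=
    fun m => div_nonneg (hK0 m) (hapos m).le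
  have hr1 : ∀ m : ℕ, (kstar θ β m : ℝ) / a m ≤ 1 :=
    fun m => (div_le_one (hapos m)).mpr (hKle m)
  have hKub : ∀ m : ℕ, (kstar θ β m : ℝ) ≤ θ * (m : ℝ) ^ β :=
    fun m => Nat.floor_le (by positivity)
  set e : ℝ := β * (1 - γ) - 1 / 2 + γ with hedef
  -- if e < 0 then u → 0
  have hu0 : e < 0 → Tendsto (fun m : ℕ => (m : ℝ) ^ e * |Δ m|) atTop (𝓝 0) := by
    intro hel
    have h1 : Tendsto (fun m : ℕ => M * (m : ℝ) ^ e) atTop (𝓝 0) := by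
      have h2 : Tendsto (fun x : ℝ => x ^ e) atTop (𝓝 0) := by
        have := tendsto_rpow_neg_atTop (neg_pos.mpr hel)
        simpa using this
      have h3 := h2.comp tendsto_natCast_atTop_atTop
      simpa using h3.const_mul M
    refine squeeze_zero' (Eventually.of_forall fun m => by positivity)
      (Eventually.of_forall fun m => ?_) h1
    rw [mul_comm M]
    exact mul_le_mul_of_nonneg_left (hM m) (Real.rpow_nonneg (Nat.cast_nonneg m) e)
  -- identity for the key quantity t m
  have hid : ∀ m : ℕ, 1 ≤ m → 1 ≤ kstar θ β m →
      1 - (kstar θ β m : ℝ) / a m =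
        (σ * c * (m : ℝ) ^ ((1 : ℝ) / 2 - γ) * |Δ m|⁻¹ * (kstar θ β m : ℝ) ^ (γ - 1)) *
          ((kstar θ β m : ℝ) / a m) ^ (1 - γ) := by
    intro m hm hKm
    have hmpos : (0:ℝ) < m := by exact_mod_cast hm
    have hKpos : (0:ℝ) < (kstar θ β m : ℝ) := by exact_mod_cast hKm
    have hap := hapos m
    have hae' : |Δ m| * (a m - (kstar θ β m : ℝ)) =
        σ * c * (m:ℝ) ^ ((1:ℝ)/2 - γ) * (a m) ^ γ := by
      have h := haeq m
      field_simp [(hΔpos m).ne'] at h ⊢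
      linarith
    have e1 : ((kstar θ β m : ℝ) / a m) ^ (1-γ) =
        (kstar θ β m : ℝ) ^ (1-γ) / (a m) ^ (1-γ) :=
      Real.div_rpow (hK0 m) hap.le _
    have e2 : (a m) ^ γ * (a m) ^ (1-γ) = a m := by
      rw [← Real.rpow_add hap]; norm_num
    have e3 : (kstar θ β m : ℝ) ^ (γ-1) * (kstar θ β m : ℝ) ^ (1-γ) = 1 := by
      rw [← Real.rpow_add hKpos]; norm_num
    rw [e1]
    have hmeq : (m:ℝ) ^ ((1:ℝ)/2 - γ) = (m:ℝ) ^ ((1 - 2*γ)/2) := by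
      congr 1; ring
    field_simp [(hΔpos m).ne', hap.ne', (Real.rpow_pos_of_pos hap (1-γ)).ne']
    linear_combination ((a m) ^ (1-γ)) * hae' + (σ * c * (m:ℝ) ^ ((1:ℝ)/2 - γ)) * e2 -
      (σ * c * (m:ℝ) ^ ((1:ℝ)/2 - γ) * a m) * e3 +
      (a m * σ * c * (kstar θ β m : ℝ) ^ (γ-1) * (kstar θ β m : ℝ) ^ (1-γ)) * hmeq
  -- t m expressed via u and v
  have ht_eq : ∀ m : ℕ, 1 ≤ m → 1 ≤ kstar θ β m →
      σ * c * (m : ℝ) ^ ((1 : ℝ) / 2 - γ) * |Δ m|⁻¹ * (kstar θ β m : ℝ) ^ (γ - 1) =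
        σ * c / (((m : ℝ) ^ e * |Δ m|) * ((kstar θ β m : ℝ) / (m : ℝ) ^ β) ^ (1 - γ)) := by
    intro m hm hKm
    have hmpos : (0:ℝ) < m := by exact_mod_cast hm
    have hKpos : (0:ℝ) < (kstar θ β m : ℝ) := by exact_mod_cast hKm
    have hβm : (0:ℝ) < (m:ℝ) ^ β := Real.rpow_pos_of_pos hmpos β
    have hspos : 0 < ((m:ℝ) ^ e * |Δ m|) * ((kstar θ β m : ℝ) / (m:ℝ) ^ β) ^ (1-γ) := by
      have hq : 0 < (kstar θ β m : ℝ) / (m:ℝ) ^ β := div_pos hKpos hβm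
      exact mul_pos (mul_pos (Real.rpow_pos_of_pos hmpos e) (hΔpos m))
        (Real.rpow_pos_of_pos hq _)
    rw [eq_div_iff hspos.ne']
    have h3 : ((kstar θ β m : ℝ) / (m:ℝ) ^ β) ^ (1-γ) =
        (kstar θ β m : ℝ) ^ (1-γ) / (m:ℝ) ^ (β*(1-γ)) := by
      rw [Real.div_rpow hKpos.le hβm.le, ← Real.rpow_mul hmpos.le]
    have h4 : (kstar θ β m : ℝ) ^ (γ-1) * (kstar θ β m : ℝ) ^ (1-γ) = 1 := by
      rw [← Real.rpow_add hKpos]; norm_num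
    have h5 : (m:ℝ) ^ ((1:ℝ)/2 - γ) * (m:ℝ) ^ e = (m:ℝ) ^ (β*(1-γ)) := by
      rw [← Real.rpow_add hmpos, hedef]; congr 1; ring
    rw [h3]
    calc σ * c * (m:ℝ) ^ ((1:ℝ)/2 - γ) * |Δ m|⁻¹ * (kstar θ β m : ℝ) ^ (γ-1) *
          ((m:ℝ) ^ e * |Δ m| * ((kstar θ β m : ℝ) ^ (1-γ) / (m:ℝ) ^ (β*(1-γ))))
        = σ * c * (((m:ℝ) ^ ((1:ℝ)/2 - γ) * (m:ℝ) ^ e) *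
            ((kstar θ β m : ℝ) ^ (γ-1) * (kstar θ β m : ℝ) ^ (1-γ)) *
            (|Δ m|⁻¹ * |Δ m|)) / (m:ℝ) ^ (β*(1-γ)) := by ring
      _ = σ * c := by
          rw [h5, h4, inv_mul_cancel₀ (hΔpos m).ne']
          field_simp
  refine ⟨?_, ?_, ?_⟩
  · -- Case I
    intro hI
    have hbound : ∀ m : ℕ, 1 ≤ m →
        (kstar θ β m : ℝ) / a m ≤ θ ^ (1 - γ) / (σ * c) * ((m : ℝ) ^ e * |Δ m|) := by
      intro m hm
      have hmpos : (0:ℝ) < m := by exact_mod_cast hm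
      have hApos : 0 < σ * c * (m:ℝ) ^ ((1:ℝ)/2 - γ) * |Δ m|⁻¹ :=
        mul_pos (mul_pos (mul_pos hσ hc) (Real.rpow_pos_of_pos hmpos _))
          (inv_pos.mpr (hΔpos m))
      have hRHS0 : 0 ≤ θ ^ (1-γ) / (σ*c) * ((m:ℝ) ^ e * |Δ m|) := by positivity
      by_cases hKz : (kstar θ β m : ℝ) = 0
      · rw [hKz, zero_div]; exact hRHS0
      · have hKpos : (0:ℝ) < (kstar θ β m : ℝ) := lt_of_le_of_ne (hK0 m) (Ne.symm hKz)
        have hKγ : (0:ℝ) < (kstar θ β m : ℝ) ^ γ := Real.rpow_pos_of_pos hKpos γ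
        have step1 : σ * c * (m:ℝ) ^ ((1:ℝ)/2 - γ) * |Δ m|⁻¹ * (kstar θ β m : ℝ) ^ γ ≤ a m := by
          have h2 : (kstar θ β m : ℝ) ^ γ ≤ (a m) ^ γ :=
            Real.rpow_le_rpow (hK0 m) (hKle m) hγ0
          have h3 := mul_le_mul_of_nonneg_left h2 hApos.le
          have h6 := haeq m
          nlinarith [hK0 m]
        have step2 : (kstar θ β m : ℝ) / a m ≤
            (kstar θ β m : ℝ) / (σ * c * (m:ℝ) ^ ((1:ℝ)/2 - γ) * |Δ m|⁻¹ * (kstar θ β m : ℝ) ^ γ) :=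
          div_le_div_of_nonneg_left (hK0 m) (mul_pos hApos hKγ) step1
        have hKsplit : (kstar θ β m : ℝ) ^ γ * (kstar θ β m : ℝ) ^ (1-γ) = (kstar θ β m : ℝ) := by
          rw [← Real.rpow_add hKpos]; norm_num
        have step3 : (kstar θ β m : ℝ) /
            (σ * c * (m:ℝ) ^ ((1:ℝ)/2 - γ) * |Δ m|⁻¹ * (kstar θ β m : ℝ) ^ γ) =
            (kstar θ β m : ℝ) ^ (1-γ) / (σ * c * (m:ℝ) ^ ((1:ℝ)/2 - γ) * |Δ m|⁻¹) := by
          rw [div_eq_div_iff (mul_pos hApos hKγ).ne' hApos.ne']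
          linear_combination (-(σ * c * (m:ℝ) ^ ((1:ℝ)/2 - γ) * |Δ m|⁻¹)) * hKsplit
        have step4 : (kstar θ β m : ℝ) ^ (1-γ) / (σ * c * (m:ℝ) ^ ((1:ℝ)/2 - γ) * |Δ m|⁻¹) ≤
            (θ * (m:ℝ) ^ β) ^ (1-γ) / (σ * c * (m:ℝ) ^ ((1:ℝ)/2 - γ) * |Δ m|⁻¹) := by
          exact (div_le_div_iff_of_pos_right hApos).mpr (Real.rpow_le_rpow (hK0 m) (hKub m) h1γ.le)
        have step5 : (θ * (m:ℝ) ^ β) ^ (1-γ) / (σ * c * (m:ℝ) ^ ((1:ℝ)/2 - γ) * |Δ m|⁻¹) =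
            θ ^ (1-γ) / (σ*c) * ((m:ℝ) ^ e * |Δ m|) := by
          have hx : (θ * (m:ℝ) ^ β) ^ (1-γ) = θ ^ (1-γ) * (m:ℝ) ^ (β*(1-γ)) := by
            rw [Real.mul_rpow hθ.le (Real.rpow_nonneg hmpos.le β), ← Real.rpow_mul hmpos.le]
          have hy : (m:ℝ) ^ (β*(1-γ)) = (m:ℝ) ^ e * (m:ℝ) ^ ((1:ℝ)/2 - γ) := by
            rw [← Real.rpow_add hmpos, hedef]; congr 1; ring
          rw [hx, hy]
          field_simp [hσ.ne', hc.ne', (hΔpos m).ne',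
            (Real.rpow_pos_of_pos hmpos ((1:ℝ)/2 - γ)).ne']
        calc (kstar θ β m : ℝ) / a m ≤ _ := step2
          _ = _ := step3
          _ ≤ _ := step4
          _ = _ := step5
    have hlim : Tendsto (fun m : ℕ => θ ^ (1 - γ) / (σ * c) * ((m : ℝ) ^ e * |Δ m|))
        atTop (𝓝 0) := by
      simpa using hI.const_mul (θ ^ (1 - γ) / (σ * c))
    exact squeeze_zero' (Eventually.of_forall hr0)
      (by filter_upwards [eventually_ge_atTop 1] with m hm using hbound m hm) hlim
  · -- Case II
    intro Ct1 hCt1 hII d1 hd1 hfix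
    have he0 : 0 ≤ e := by
      by_contra h
      have := tendsto_nhds_unique (hu0 (lt_of_not_ge h)) hII
      linarith
    rw [hedef] at he0
    have hβpos : 0 < β := by
      by_contra h
      push_neg at h
      nlinarith
    have hK1 : ∀ᶠ m : ℕ in atTop, 1 ≤ kstar θ β m := by
      have := (aux_kstar_atTop hθ hβpos).eventually_ge_atTop (1 : ℝ)
      filter_upwards [this] with m hm
      exact_mod_cast hm
    have hslim : Tendsto
        (fun m : ℕ => ((m : ℝ) ^ e * |Δ m|) * ((kstar θ β m : ℝ) / (m : ℝ) ^ β) ^ (1 - γ))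
        atTop (𝓝 (Ct1 * θ ^ (1 - γ))) :=
      hII.mul ((aux_kstar_div θ β hθ hβpos).rpow_const (Or.inl hθ.ne'))
    set T : ℝ := c * σ / (θ ^ (1 - γ) * Ct1) with hTdef
    have hTpos : 0 < T :=
      div_pos (mul_pos hc hσ) (mul_pos (Real.rpow_pos_of_pos hθ _) hCt1)
    have htlim : Tendsto
        (fun m : ℕ => σ * c * (m : ℝ) ^ ((1 : ℝ) / 2 - γ) * |Δ m|⁻¹ *
          (kstar θ β m : ℝ) ^ (γ - 1)) atTop (𝓝 T) := by
      have h1 : Tendsto (fun m : ℕ => σ * c /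
          (((m : ℝ) ^ e * |Δ m|) * ((kstar θ β m : ℝ) / (m : ℝ) ^ β) ^ (1 - γ)))
          atTop (𝓝 (σ * c / (Ct1 * θ ^ (1 - γ)))) :=
        tendsto_const_nhds.div hslim
          (ne_of_gt (mul_pos hCt1 (Real.rpow_pos_of_pos hθ _)))
      have h2 : σ * c / (Ct1 * θ ^ (1 - γ)) = T := by rw [hTdef]; ring
      rw [← h2]
      apply Tendsto.congr' _ h1
      filter_upwards [hK1, eventually_ge_atTop 1] with m h1m h2m
      exact (ht_eq m h2m h1m).symm
    obtain ⟨hd1a, hd1b⟩ := hd1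
    have hgd1 : 1 - d1 - T * d1 ^ (1 - γ) = 0 := by rw [hTdef]; linarith [hfix]
    have hganti : ∀ x y : ℝ, 0 ≤ x → x < y →
        1 - y - T * y ^ (1 - γ) < 1 - x - T * x ^ (1 - γ) := by
      intro x y hx hxy
      have h7 : x ^ (1 - γ) ≤ y ^ (1 - γ) := Real.rpow_le_rpow hx hxy.le h1γ.le
      linarith [mul_le_mul_of_nonneg_left h7 hTpos.le]
    rw [Metric.tendsto_atTop]
    intro ε hε
    set ε' : ℝ := min ε (min (d1 / 2) ((1 - d1) / 2)) with hε'def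
    have hε'pos : 0 < ε' := lt_min hε (lt_min (by linarith) (by linarith))
    have hε'd1 : ε' ≤ d1 / 2 := le_trans (min_le_right _ _) (min_le_left _ _)
    have hε'd2 : ε' ≤ (1 - d1) / 2 := le_trans (min_le_right _ _) (min_le_right _ _)
    have hε'ε : ε' ≤ ε := min_le_left _ _
    have hδ1 : 0 < 1 - (d1 - ε') - T * (d1 - ε') ^ (1 - γ) := by
      have := hganti (d1 - ε') d1 (by linarith) (by linarith)
      linarith
    have hδ2 : 1 - (d1 + ε') - T * (d1 + ε') ^ (1 - γ) < 0 := by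
      have := hganti d1 (d1 + ε') (by linarith) (by linarith)
      linarith
    set δ : ℝ := min (1 - (d1 - ε') - T * (d1 - ε') ^ (1 - γ))
      (-(1 - (d1 + ε') - T * (d1 + ε') ^ (1 - γ))) with hδdef
    have hδpos : 0 < δ := lt_min hδ1 (by linarith)
    have hev1 : ∀ᶠ m : ℕ in atTop, |σ * c * (m : ℝ) ^ ((1 : ℝ) / 2 - γ) * |Δ m|⁻¹ *
        (kstar θ β m : ℝ) ^ (γ - 1) - T| < δ := by
      have h8 := Metric.tendsto_atTop.mp htlim δ hδpos
      obtain ⟨N, hN⟩ := h8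
      filter_upwards [eventually_ge_atTop N] with m hm
      simpa [Real.dist_eq] using hN m hm
    have hev2 : ∀ᶠ m : ℕ in atTop,
        1 - (kstar θ β m : ℝ) / a m =
          (σ * c * (m : ℝ) ^ ((1 : ℝ) / 2 - γ) * |Δ m|⁻¹ * (kstar θ β m : ℝ) ^ (γ - 1)) *
            ((kstar θ β m : ℝ) / a m) ^ (1 - γ) := by
      filter_upwards [hK1, eventually_ge_atTop 1] with m h1m h2m
      exact hid m h2m h1m
    obtain ⟨N1, hN1⟩ := eventually_atTop.mp hev1
    obtain ⟨N2, hN2⟩ := eventually_atTop.mp hev2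
    refine ⟨max N1 N2, fun m hm => ?_⟩
    have h1 := hN1 m (le_trans (le_max_left _ _) hm)
    have h2 := hN2 m (le_trans (le_max_right _ _) hm)
    set r : ℝ := (kstar θ β m : ℝ) / a m with hrdef
    set t : ℝ := σ * c * (m : ℝ) ^ ((1 : ℝ) / 2 - γ) * |Δ m|⁻¹ *
      (kstar θ β m : ℝ) ^ (γ - 1) with htdef
    have hr0m : 0 ≤ r := hr0 m
    have hr1m : r ≤ 1 := hr1 m
    have hrpow1 : r ^ (1 - γ) ≤ 1 := Real.rpow_le_one hr0m hr1m h1γ.le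
    have hrpow0 : 0 ≤ r ^ (1 - γ) := Real.rpow_nonneg hr0m _
    have hg : |1 - r - T * r ^ (1 - γ)| < δ := by
      have h9 : 1 - r - T * r ^ (1 - γ) = (t - T) * r ^ (1 - γ) := by
        rw [h2]; ring
      rw [h9, abs_mul]
      calc |t - T| * |r ^ (1 - γ)| ≤ |t - T| * 1 := by
            apply mul_le_mul_of_nonneg_left _ (abs_nonneg _)
            rw [abs_of_nonneg hrpow0]; exact hrpow1
        _ = |t - T| := mul_one _
        _ < δ := h1
    have habs := abs_lt.mp hg
    have hlow : d1 - ε' < r := by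
      by_contra hcon
      push_neg at hcon
      have h10 : r ^ (1 - γ) ≤ (d1 - ε') ^ (1 - γ) :=
        Real.rpow_le_rpow hr0m hcon h1γ.le
      have h11 : 1 - (d1 - ε') - T * (d1 - ε') ^ (1 - γ) ≤ 1 - r - T * r ^ (1 - γ) := by
        linarith [mul_le_mul_of_nonneg_left h10 hTpos.le]
      have h12 : δ ≤ 1 - (d1 - ε') - T * (d1 - ε') ^ (1 - γ) := min_le_left _ _
      linarith
    have hhigh : r < d1 + ε' := by
      by_contra hcon
      push_neg at hcon
      have h10 : (d1 + ε') ^ (1 - γ) ≤ r ^ (1 - γ) :=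
        Real.rpow_le_rpow (by linarith) hcon h1γ.le
      have h11 : 1 - r - T * r ^ (1 - γ) ≤ 1 - (d1 + ε') - T * (d1 + ε') ^ (1 - γ) := by
        linarith [mul_le_mul_of_nonneg_left h10 hTpos.le]
      have h12 : δ ≤ -(1 - (d1 + ε') - T * (d1 + ε') ^ (1 - γ)) := min_le_right _ _
      linarith
    rw [Real.dist_eq]
    have : |r - d1| < ε' := abs_lt.mpr ⟨by linarith, by linarith⟩
    exact lt_of_lt_of_le this hε'ε
  · -- Case III
    intro hIII
    have he0 : 0 ≤ e := by
      by_contra h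
      exact not_tendsto_atTop_of_tendsto_nhds (hu0 (lt_of_not_ge h)) hIII
    rw [hedef] at he0
    have hβpos : 0 < β := by
      by_contra h
      push_neg at h
      nlinarith
    have hK1 : ∀ᶠ m : ℕ in atTop, 1 ≤ kstar θ β m := by
      have := (aux_kstar_atTop hθ hβpos).eventually_ge_atTop (1 : ℝ)
      filter_upwards [this] with m hm
      exact_mod_cast hm
    have hslim : Tendsto
        (fun m : ℕ => ((m : ℝ) ^ e * |Δ m|) * ((kstar θ β m : ℝ) / (m : ℝ) ^ β) ^ (1 - γ))
        atTop atTop :=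
      Filter.Tendsto.atTop_mul_pos (Real.rpow_pos_of_pos hθ (1 - γ)) hIII
        ((aux_kstar_div θ β hθ hβpos).rpow_const (Or.inl hθ.ne'))
    have htlim : Tendsto
        (fun m : ℕ => σ * c * (m : ℝ) ^ ((1 : ℝ) / 2 - γ) * |Δ m|⁻¹ *
          (kstar θ β m : ℝ) ^ (γ - 1)) atTop (𝓝 0) := by
      apply Tendsto.congr' _ ((tendsto_const_nhds (x := σ * c)).div_atTop hslim)
      filter_upwards [hK1, eventually_ge_atTop 1] with m h1m h2m
      exact (ht_eq m h2m h1m).symm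
    -- squeeze r between 1 - t and 1
    have hlow : Tendsto (fun m : ℕ => 1 - σ * c * (m : ℝ) ^ ((1 : ℝ) / 2 - γ) * |Δ m|⁻¹ *
        (kstar θ β m : ℝ) ^ (γ - 1)) atTop (𝓝 1) := by
      simpa using tendsto_const_nhds.sub htlim
    apply tendsto_of_tendsto_of_tendsto_of_le_of_le' hlow tendsto_const_nhds
    · filter_upwards [hK1, eventually_ge_atTop 1] with m h1m h2m
      have h3 := hid m h2m h1m
      have h4 : ((kstar θ β m : ℝ) / a m) ^ (1 - γ) ≤ 1 :=
        Real.rpow_le_one (hr0 m) (hr1 m) h1γ.le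
      have h5 : 0 ≤ σ * c * (m : ℝ) ^ ((1 : ℝ) / 2 - γ) * |Δ m|⁻¹ *
          (kstar θ β m : ℝ) ^ (γ - 1) := by positivity
      nlinarith
    · filter_upwards with m using hr1 m


end
end

section
/- Under assumptions (A3)–(A5), γ ∈ [0,1/2), and Δ_m > 0 for all m, for every fixed x ∈ ℝ one has N(m,x)/a_m(c) → 1 as m → ∞. -/
open MeasureTheory ProbabilityTheory Filter Finset Real Topology

noncomputable section

private lemma Nseq_aux (σ x γ Δ D Aγ s k : ℝ) (hD : D ≠ 0) (hAγ : Aγ ≠ 0)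
    (hs : s ≠ 0) (hΔ : Δ ≠ 0) :
    (s * s - k) / Aγ + k / Aγ - σ * x * (s / Aγ) * (1 - γ) / (Δ * D)
      = s * s / Aγ * (1 - σ * x * (1 - γ) / (s * Δ * D)) := by
  field_simp
  ring

/-- Lemma A.1 b): `N(m,x)/a_m(c) → 1` for every fixed `x`. -/
theorem Nseq_div_aseq_tendsto_one
    (σ c θ β γ : ℝ) (Δ : ℕ → ℝ) (a : ℕ → ℝ)
    (hγ : γ ∈ Set.Ico (0 : ℝ) (1 / 2)) (hσ : 0 < σ) (hc : 0 < c) (hθ : 0 < θ)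
    (hβ : β ∈ Set.Ico (0 : ℝ) 1)
    (hΔpos : ∀ m : ℕ, 0 < Δ m)
    (hA4 : Tendsto (fun m : ℕ => Real.sqrt m * |Δ m|) atTop atTop)
    (hA5 : ∃ M : ℝ, ∀ m : ℕ, |Δ m| ≤ M)
    (ha : ∀ m : ℕ, 0 < a m ∧
      a m = σ * c * (m : ℝ) ^ ((1 : ℝ) / 2 - γ) * (Δ m)⁻¹ * a m ^ γ + (kstar θ β m : ℝ))
    (x : ℝ) :
    Tendsto (fun m : ℕ => Nseq σ c γ Δ (kstar θ β) a x m / a m) atTop (𝓝 1) := by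
  obtain ⟨hγ0, hγhalf⟩ := hγ
  have hp : (0:ℝ) < 1 - γ := by linarith
  have hq : (0:ℝ) < 1 - 2*γ := by linarith
  have hA : ∀ m, 0 < a m := fun m => (ha m).1
  set f : ℕ → ℝ := fun m => Real.sqrt (a m) * Δ m with hfdef
  set T : ℕ → ℝ := fun m =>
    σ * x * (1 - γ) / (f m * (1 - γ * (1 - (kstar θ β m : ℝ) / a m))) with hTdef
  have hf0 : ∀ m, 0 < f m := fun m => mul_pos (Real.sqrt_pos.mpr (hA m)) (hΔpos m)
  have hkA : ∀ m, (kstar θ β m : ℝ) ≤ a m := by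
    intro m
    have h := (ha m).2
    have h1 : 0 ≤ σ * c * (m:ℝ) ^ ((1:ℝ)/2 - γ) * (Δ m)⁻¹ * a m ^ γ := by
      have h2 : (0:ℝ) ≤ (m:ℝ) ^ ((1:ℝ)/2 - γ) := Real.rpow_nonneg (Nat.cast_nonneg m) _
      have h3 : (0:ℝ) ≤ a m ^ γ := Real.rpow_nonneg (hA m).le _
      have h4 : (0:ℝ) ≤ (Δ m)⁻¹ := inv_nonneg.mpr (hΔpos m).le
      positivity
    linarith
  have hD : ∀ m, 1 - γ ≤ 1 - γ * (1 - (kstar θ β m : ℝ) / a m) := by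
    intro m
    have h1 : (kstar θ β m : ℝ) / a m ≤ 1 := (div_le_one (hA m)).mpr (hkA m)
    have h2 : 0 ≤ (kstar θ β m : ℝ) / a m := div_nonneg (Nat.cast_nonneg _) (hA m).le
    nlinarith
  have hDpos : ∀ m, 0 < 1 - γ * (1 - (kstar θ β m : ℝ) / a m) :=
    fun m => lt_of_lt_of_le hp (hD m)
  -- key inequality 1
  have hkey : ∀ m : ℕ, σ * c * (m:ℝ) ^ ((1:ℝ)/2 - γ) / Δ m ≤ a m ^ ((1:ℝ) - γ) := by
    intro m
    have hAγ : (0:ℝ) < a m ^ γ := Real.rpow_pos_of_pos (hA m) _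
    have e1 : a m ^ ((1:ℝ) - γ) = a m / a m ^ γ := by
      rw [Real.rpow_sub (hA m), Real.rpow_one]
    rw [e1, div_le_div_iff₀ (hΔpos m) hAγ]
    have h := (ha m).2
    have hk0 : (0:ℝ) ≤ (kstar θ β m : ℝ) := Nat.cast_nonneg _
    have hΔ := hΔpos m
    have h5 : σ * c * (m:ℝ)^((1:ℝ)/2-γ) * (Δ m)⁻¹ * a m ^ γ ≤ a m := by linarith
    calc σ * c * (m:ℝ)^((1:ℝ)/2-γ) * a m ^ γ
        = (σ * c * (m:ℝ)^((1:ℝ)/2-γ) * (Δ m)⁻¹ * a m ^ γ) * Δ m := by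
          field_simp
      _ ≤ a m * Δ m := mul_le_mul_of_nonneg_right h5 hΔ.le
  -- key inequality 2
  have hkey2 : ∀ m : ℕ,
      σ * c * (Real.sqrt m * Δ m) ^ ((1:ℝ) - 2*γ) ≤ f m ^ (2*((1:ℝ) - γ)) := by
    intro m
    have hΔ := hΔpos m
    have hm0 : (0:ℝ) ≤ (m:ℝ) := Nat.cast_nonneg m
    have e1 : f m ^ (2*((1:ℝ)-γ)) = a m ^ ((1:ℝ)-γ) * (Δ m ^ ((1:ℝ)-2*γ) * Δ m) := by
      show (Real.sqrt (a m) * Δ m) ^ (2*((1:ℝ)-γ)) = _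
      rw [Real.mul_rpow (Real.sqrt_nonneg _) hΔ.le]
      congr 1
      · rw [Real.sqrt_eq_rpow, ← Real.rpow_mul (hA m).le]
        congr 1; ring
      · rw [show 2*((1:ℝ)-γ) = (1-2*γ) + 1 by ring, Real.rpow_add hΔ, Real.rpow_one]
    have e2 : (Real.sqrt m * Δ m) ^ ((1:ℝ)-2*γ)
        = (m:ℝ) ^ ((1:ℝ)/2 - γ) * Δ m ^ ((1:ℝ)-2*γ) := by
      rw [Real.mul_rpow (Real.sqrt_nonneg _) hΔ.le]
      congr 1
      rw [Real.sqrt_eq_rpow, ← Real.rpow_mul hm0]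
      congr 1; ring
    rw [e1, e2]
    have h := mul_le_mul_of_nonneg_right (hkey m)
      (mul_nonneg (Real.rpow_nonneg hΔ.le ((1:ℝ)-2*γ)) hΔ.le)
    calc σ * c * ((m:ℝ)^((1:ℝ)/2-γ) * Δ m ^ ((1:ℝ)-2*γ))
        = σ * c * (m:ℝ)^((1:ℝ)/2-γ) / Δ m * (Δ m ^ ((1:ℝ)-2*γ) * Δ m) := by
          field_simp
      _ ≤ _ := h
  -- f tends to infinity
  have hg : Tendsto (fun m : ℕ => Real.sqrt m * Δ m) atTop atTop := by
    refine hA4.congr (fun m => ?_)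
    rw [abs_of_pos (hΔpos m)]
  have h1 : Tendsto (fun m : ℕ => σ * c * (Real.sqrt m * Δ m) ^ ((1:ℝ)-2*γ))
      atTop atTop := by
    exact ((tendsto_rpow_atTop hq).comp hg).const_mul_atTop (mul_pos hσ hc)
  have hfa : Tendsto f atTop atTop := by
    rw [tendsto_atTop]
    intro C
    filter_upwards [h1.eventually_ge_atTop (max C 1 ^ (2*((1:ℝ)-γ)))] with m hm
    have h2 : max C 1 ^ (2*((1:ℝ)-γ)) ≤ f m ^ (2*((1:ℝ)-γ)) := hm.trans (hkey2 m)
    have h3 : max C 1 ≤ f m := by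
      by_contra hlt
      push_neg at hlt
      have := Real.rpow_lt_rpow (hf0 m).le hlt (by linarith : (0:ℝ) < 2*(1-γ))
      linarith
    exact (le_max_left C 1).trans h3
  -- T tends to zero
  have hT : Tendsto T atTop (𝓝 0) := by
    have hb : Tendsto (fun m => σ * |x| * (f m)⁻¹) atTop (𝓝 0) := by
      have := (tendsto_inv_atTop_zero.comp hfa).const_mul (σ * |x|)
      simpa using this
    apply squeeze_zero_norm _ hb
    intro m
    have hDm := hDpos m
    have hfm := hf0 m
    have habs : ‖T m‖
        = σ * |x| * (1-γ) / (f m * (1 - γ * (1 - (kstar θ β m : ℝ) / a m))) := by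
      rw [hTdef]
      simp only [Real.norm_eq_abs, abs_div, abs_mul]
      rw [abs_of_pos hσ, abs_of_pos hp, abs_of_pos hfm, abs_of_pos hDm]
    rw [habs]
    calc σ * |x| * (1-γ) / (f m * (1 - γ * (1 - (kstar θ β m : ℝ) / a m)))
        ≤ σ * |x| * (1-γ) / (f m * (1-γ)) := by
          apply div_le_div_of_nonneg_left (by positivity) (by positivity)
          exact mul_le_mul_of_nonneg_left (hD m) hfm.le
      _ = σ * |x| * (f m)⁻¹ := by
          field_simp
  -- the key algebraic identity
  have hNeq : ∀ m : ℕ, Nseq σ c γ Δ (kstar θ β) a x m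
      = (a m ^ ((1:ℝ) - γ) * (1 - T m)) ^ ((1:ℝ)/(1-γ)) := by
    intro m
    unfold Nseq
    congr 1
    have hAm := hA m
    have hAγ : (0:ℝ) < a m ^ γ := Real.rpow_pos_of_pos hAm _
    have hS : (0:ℝ) < Real.sqrt (a m) := Real.sqrt_pos.mpr hAm
    have hS2 : Real.sqrt (a m) * Real.sqrt (a m) = a m := Real.mul_self_sqrt hAm.le
    have hΔ := hΔpos m
    have hDm := hDpos m
    have e1 : a m ^ ((1:ℝ) - γ) = a m / a m ^ γ := by
      rw [Real.rpow_sub hAm, Real.rpow_one]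
    have e2 : a m ^ ((1:ℝ)/2 - γ) = Real.sqrt (a m) / a m ^ γ := by
      rw [Real.sqrt_eq_rpow, ← Real.rpow_sub hAm]
    have e3 : σ * c * (m:ℝ) ^ ((1:ℝ)/2 - γ) / Δ m
        = (a m - (kstar θ β m : ℝ)) / a m ^ γ := by
      have h2 : a m - (kstar θ β m : ℝ)
          = σ * c * (m:ℝ)^((1:ℝ)/2-γ) * (Δ m)⁻¹ * a m ^ γ := by
        linarith [(ha m).2]
      rw [h2]
      field_simp
    rw [e3, e2, e1, hTdef]
    show _ = a m / a m ^ γ *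
      (1 - σ * x * (1 - γ) /
        (Real.sqrt (a m) * Δ m * (1 - γ * (1 - (kstar θ β m : ℝ) / a m))))
    have e4 := Nseq_aux σ x γ (Δ m) (1 - γ * (1 - (kstar θ β m : ℝ) / a m))
      (a m ^ γ) (Real.sqrt (a m)) (kstar θ β m : ℝ)
      hDm.ne' hAγ.ne' hS.ne' hΔ.ne'
    rw [hS2] at e4
    exact e4
  -- conclude
  have hT1 : ∀ᶠ m in atTop, T m < 1 := hT.eventually (gt_mem_nhds one_pos)
  have hev : ∀ᶠ m in atTop,
      Nseq σ c γ Δ (kstar θ β) a x m / a m = (1 - T m) ^ ((1:ℝ)/(1-γ)) := by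
    filter_upwards [hT1] with m hm
    have h1T : (0:ℝ) ≤ 1 - T m := by linarith
    rw [hNeq m, Real.mul_rpow (Real.rpow_nonneg (hA m).le _) h1T,
        ← Real.rpow_mul (hA m).le,
        show ((1:ℝ)-γ) * ((1:ℝ)/(1-γ)) = 1 by field_simp,
        Real.rpow_one, mul_comm, mul_div_assoc, div_self (hA m).ne', mul_one]
  have hlim : Tendsto (fun m => (1 - T m) ^ ((1:ℝ)/(1-γ))) atTop (𝓝 1) := by
    have h1 : Tendsto (fun m => 1 - T m) atTop (𝓝 1) := by
      simpa using tendsto_const_nhds.sub hT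
    have h2 := h1.rpow_const (p := (1:ℝ)/(1-γ)) (Or.inl one_ne_zero)
    simpa using h2
  exact Tendsto.congr' (hev.mono fun m hm => hm.symm) hlim

end
end

section
/- Under assumptions (A3)–(A5), γ ∈ [0,1/2), and Δ_m > 0 for all m, for every fixed x ∈ ℝ one has (1/σ)·(N(m,x)/m)^{γ−1/2}·( σc − Δ_m·m^{γ−1/2}·( N(m,x)^{1−γ} − k*_m/N(m,x)^γ ) ) → x as m → ∞. -/
open MeasureTheory ProbabilityTheory Filter Finset Real Topology

noncomputable section

private noncomputable def gg (γ ε : ℝ) : ℝ :=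
  if ε = 0 then γ / (1 - γ) else ((1 - ε) ^ (-(γ / (1 - γ))) - 1) / ε

private lemma gg_eq (γ ε : ℝ) : (1 - ε) ^ (-(γ / (1 - γ))) = 1 + ε * gg γ ε := by
  unfold gg
  by_cases h : ε = 0
  · simp [h, Real.one_rpow]
  · rw [if_neg h, mul_div_assoc', mul_div_cancel_left₀ _ h]; ring

private lemma slope_rpow (p : ℝ) :
    Tendsto (fun ε : ℝ => ((1 - ε) ^ p - 1) / ε) (𝓝[≠] (0:ℝ)) (𝓝 (-p)) := by
  have h2 : HasDerivAt (fun ε : ℝ => 1 - ε) (-1) 0 := by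
    simpa using ((hasDerivAt_id (0:ℝ)).const_sub 1)
  have h1 : HasDerivAt (fun y : ℝ => y ^ p) (p * ((1:ℝ)-(0:ℝ)) ^ (p - 1))
      ((fun ε : ℝ => 1 - ε) 0) := by
    refine Real.hasDerivAt_rpow_const ?_
    norm_num
  have h3 : HasDerivAt (fun ε : ℝ => (1 - ε) ^ p) (-p) 0 := by
    have := HasDerivAt.comp (0:ℝ) h1 h2
    simpa [Real.one_rpow, Function.comp_def] using this
  have h4 := hasDerivAt_iff_tendsto_slope.mp h3
  refine h4.congr' ?_
  filter_upwards [self_mem_nhdsWithin] with ε hε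
  rw [slope_def_field]
  norm_num [Real.one_rpow]

private lemma key_algebra (σ x γ Δ kf Q A1 A2 A3 M U e s gg : ℝ)
    (hσ : σ ≠ 0) (hΔ : Δ ≠ 0) (hQ : 0 < Q) (hA3 : 0 < A3) (hM : M ≠ 0)
    (hden : Q * Q - γ * (Q * Q - kf) ≠ 0)
    (hA1 : A3 * A1 = Q) (hA2 : A2 = Q * A3)
    (hs : s = (Q * Q - γ * (Q * Q - kf)) / (Q * Q))
    (he : e = σ * x * (1 - γ) / (Δ * Q * s)) :
    σ⁻¹ * (A3 * U / M) *
      (Δ * M * (A1 - kf / A2) - Δ * M * (A1 * (1 - e) - kf / A2 * (1 + e * gg))) =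
    x * ((1 + kf / (Q * Q) / s * ((1 - γ) * gg - γ)) * U) := by
  have hA1' : A1 = Q / A3 := by
    field_simp [hA3.ne'] at hA1 ⊢; linarith [hA1]
  subst hA1' hA2 he hs
  have hden' : Q ^ 2 - Q ^ 2 * γ + kf * γ ≠ 0 := by intro h; apply hden; linarith [h]
  have hinv : (Q ^ 2 - Q ^ 2 * γ + kf * γ) * (Q ^ 2 - Q ^ 2 * γ + kf * γ)⁻¹ = 1 :=
    mul_inv_cancel₀ hden'
  field_simp
  linear_combination (U * Q * σ * x) * hinv

private lemma ha1_lemma (σ c θ β γ : ℝ) (Δ a : ℕ → ℝ) (m : ℕ)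
    (hΔ : 0 < Δ m) (hap : 0 < a m)
    (heq : a m = σ * c * (m:ℝ) ^ ((1:ℝ)/2 - γ) * (Δ m)⁻¹ * a m ^ γ + (kstar θ β m : ℝ)) :
    a m ^ ((1:ℝ) - γ) = σ * c * (m:ℝ) ^ ((1:ℝ)/2 - γ) / Δ m + (kstar θ β m : ℝ) / a m ^ γ := by
  have haγ : (0:ℝ) < a m ^ γ := Real.rpow_pos_of_pos hap γ
  have heq' : a m * Δ m = σ * c * (m:ℝ) ^ ((1:ℝ)/2 - γ) * a m ^ γ +
      (kstar θ β m : ℝ) * Δ m := by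
    nth_rewrite 1 [heq]
    field_simp
  rw [Real.rpow_sub hap, Real.rpow_one,
    div_add_div _ _ hΔ.ne' haγ.ne', div_eq_div_iff haγ.ne' (mul_ne_zero hΔ.ne' haγ.ne')]
  linear_combination a m ^ γ * heq'

set_option maxHeartbeats 1000000 in
private lemma key_identity (σ c θ β γ x : ℝ) (Δ a : ℕ → ℝ) (m : ℕ)
    (hσ : 0 < σ) (hc : 0 < c) (hγ0 : 0 ≤ γ) (hγ2 : γ < 1/2)
    (hΔ : 0 < Δ m) (hm : 1 ≤ m) (hap : 0 < a m)
    (heq : a m = σ * c * (m:ℝ) ^ ((1:ℝ)/2 - γ) * (Δ m)⁻¹ * a m ^ γ + (kstar θ β m : ℝ))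
    (s e : ℝ)
    (hs : s = 1 - γ * (1 - (kstar θ β m : ℝ) / a m))
    (he : e = σ * x * (1 - γ) / (Δ m * Real.sqrt (a m) * s))
    (he2 : |e| < 1/2) :
    σ⁻¹ * (Nseq σ c γ Δ (kstar θ β) a x m / m) ^ (γ - 1/2) *
      (σ * c - Δ m * (m:ℝ) ^ (γ - 1/2) *
        (Nseq σ c γ Δ (kstar θ β) a x m ^ (1 - γ) -
          (kstar θ β m : ℝ) / Nseq σ c γ Δ (kstar θ β) a x m ^ γ)) =
    x * ((1 + ((kstar θ β m : ℝ) / a m) / s * ((1 - γ) * gg γ e - γ)) *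
      (1 - e) ^ ((γ - 1/2)/(1 - γ))) := by
  have hγ1 : (0:ℝ) < 1 - γ := by linarith
  have hmR : (0:ℝ) < (m:ℝ) := by exact_mod_cast hm
  have haγ : (0:ℝ) < a m ^ γ := Real.rpow_pos_of_pos hap γ
  have hQ : 0 < Real.sqrt (a m) := Real.sqrt_pos.mpr hap
  have hQQ : Real.sqrt (a m) * Real.sqrt (a m) = a m := Real.mul_self_sqrt hap.le
  set kf : ℝ := (kstar θ β m : ℝ) with hkf
  have hk0 : 0 ≤ kf := Nat.cast_nonneg _
  have hmp : (0:ℝ) < (m:ℝ) ^ ((1:ℝ)/2 - γ) := Real.rpow_pos_of_pos hmR _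
  have hD : 0 < σ * c * (m:ℝ) ^ ((1:ℝ)/2 - γ) * (Δ m)⁻¹ * a m ^ γ :=
    mul_pos (mul_pos (mul_pos (mul_pos hσ hc) hmp) (inv_pos.mpr hΔ)) haγ
  have hka : kf < a m := by rw [heq]; linarith
  have hr1 : kf / a m < 1 := (div_lt_one hap).mpr hka
  have hr0 : 0 ≤ kf / a m := div_nonneg hk0 hap.le
  have hslb : 1 - γ ≤ s := by rw [hs]; nlinarith
  have hspos : 0 < s := lt_of_lt_of_le hγ1 hslb
  have h1e : 0 < 1 - e := by
    have := abs_lt.mp he2; linarith [this.2]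
  have ha1 : a m ^ ((1:ℝ) - γ) = σ * c * (m:ℝ) ^ ((1:ℝ)/2 - γ) / Δ m + kf / a m ^ γ :=
    ha1_lemma σ c θ β γ Δ a m hΔ hap heq
  have hmm : (m:ℝ) ^ (γ - 1/2) * (m:ℝ) ^ ((1:ℝ)/2 - γ) = 1 := by
    rw [← Real.rpow_add hmR]; norm_num
  have hsc : σ * c = Δ m * (m:ℝ) ^ (γ - 1/2) * (a m ^ ((1:ℝ) - γ) - kf / a m ^ γ) := by
    rw [ha1, add_sub_cancel_right]
    have h2 : Δ m * (m:ℝ) ^ (γ - 1/2) * (σ * c * (m:ℝ) ^ ((1:ℝ)/2 - γ) / Δ m) =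
        σ * c * ((m:ℝ) ^ (γ - 1/2) * (m:ℝ) ^ ((1:ℝ)/2 - γ)) * (Δ m / Δ m) := by ring
    rw [h2, div_self hΔ.ne', hmm, mul_one, mul_one]
  -- split a^{1-γ} = a^{1/2-γ} * sqrt a
  have hval : a m ^ ((1:ℝ) - γ) = a m ^ ((1:ℝ)/2 - γ) * Real.sqrt (a m) := by
    have hexp : (1:ℝ) - γ = ((1:ℝ)/2 - γ) + 1/2 := by ring
    rw [hexp, Real.rpow_add hap, Real.sqrt_eq_rpow]
  -- inside of Nseq
  have hsne : Δ m * (1 - γ * (1 - kf / a m)) = Δ m * s := by rw [hs]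
  have hI : σ * c * (m:ℝ) ^ ((1:ℝ)/2 - γ) / Δ m + kf / a m ^ γ -
      σ * x * a m ^ ((1:ℝ)/2 - γ) * (1 - γ) / (Δ m * (1 - γ * (1 - kf / a m))) =
      a m ^ ((1:ℝ) - γ) * (1 - e) := by
    rw [hsne, ← ha1, he, hval]
    field_simp
  set v : ℝ := (1 - e) ^ ((1:ℝ) / (1 - γ)) with hvdef
  have hv : 0 < v := Real.rpow_pos_of_pos h1e _
  have hNval : Nseq σ c γ Δ (kstar θ β) a x m = a m * v := by
    rw [Nseq, ← hkf, hI, Real.mul_rpow (Real.rpow_nonneg hap.le _) h1e.le,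
      ← Real.rpow_mul hap.le]
    rw [mul_one_div_cancel hγ1.ne', Real.rpow_one]
  have hA : (a m * v / (m:ℝ)) ^ (γ - 1/2) =
      a m ^ (γ - 1/2) * v ^ (γ - 1/2) / (m:ℝ) ^ (γ - 1/2) := by
    rw [Real.div_rpow (mul_nonneg hap.le hv.le) (Nat.cast_nonneg m),
      Real.mul_rpow hap.le hv.le]
  have hB : (a m * v) ^ ((1:ℝ) - γ) = a m ^ ((1:ℝ) - γ) * (1 - e) := by
    rw [Real.mul_rpow hap.le hv.le, hvdef, ← Real.rpow_mul h1e.le,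
      one_div_mul_cancel hγ1.ne', Real.rpow_one]
  have hC : kf / (a m * v) ^ γ = kf / a m ^ γ * (1 + e * gg γ e) := by
    rw [Real.mul_rpow hap.le hv.le, hvdef, ← Real.rpow_mul h1e.le]
    rw [show (1:ℝ) / (1 - γ) * γ = γ / (1 - γ) by ring]
    rw [div_mul_eq_div_div, div_eq_mul_inv (kf / a m ^ γ), ← Real.rpow_neg h1e.le, gg_eq]
  have hU : v ^ (γ - 1/2) = (1 - e) ^ ((γ - 1/2) / (1 - γ)) := by
    rw [hvdef, ← Real.rpow_mul h1e.le]
    congr 1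
    ring
  rw [hNval, hA, hB, hC, hU, hsc]
  have hden0 : 0 < a m - γ * (a m - kf) := by
    have h1 : γ * (a m - kf) ≤ (1/2) * (a m - kf) :=
      mul_le_mul_of_nonneg_right hγ2.le (by linarith)
    linarith
  have hden : Real.sqrt (a m) * Real.sqrt (a m) -
      γ * (Real.sqrt (a m) * Real.sqrt (a m) - kf) ≠ 0 := by
    rw [hQQ]; exact hden0.ne'
  have hA1 : a m ^ (γ - 1/2) * a m ^ ((1:ℝ) - γ) = Real.sqrt (a m) := by
    rw [← Real.rpow_add hap, Real.sqrt_eq_rpow]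
    norm_num
  have hA2 : a m ^ γ = Real.sqrt (a m) * a m ^ (γ - 1/2) := by
    rw [Real.sqrt_eq_rpow, ← Real.rpow_add hap]
    norm_num
  have hs' : s = (Real.sqrt (a m) * Real.sqrt (a m) -
      γ * (Real.sqrt (a m) * Real.sqrt (a m) - kf)) /
      (Real.sqrt (a m) * Real.sqrt (a m)) := by
    rw [hs, hQQ]
    field_simp
  have hgoal := key_algebra σ x γ (Δ m) kf (Real.sqrt (a m)) (a m ^ ((1:ℝ) - γ))
    (a m ^ γ) (a m ^ (γ - 1/2)) ((m:ℝ) ^ (γ - 1/2)) ((1 - e) ^ ((γ - 1/2) / (1 - γ)))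
    e s (gg γ e) hσ.ne' hΔ.ne' hQ (Real.rpow_pos_of_pos hap _)
    (Real.rpow_pos_of_pos hmR _).ne' hden hA1 hA2 hs' he
  rw [hQQ] at hgoal
  exact hgoal

/-- Lemma A.1 c): the key centering limit for `N(m,x)`. -/
theorem Nseq_centering_limit
    (σ c θ β γ : ℝ) (Δ : ℕ → ℝ) (a : ℕ → ℝ)
    (hγ : γ ∈ Set.Ico (0 : ℝ) (1 / 2)) (hσ : 0 < σ) (hc : 0 < c) (hθ : 0 < θ)
    (hβ : β ∈ Set.Ico (0 : ℝ) 1)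
    (hΔpos : ∀ m : ℕ, 0 < Δ m)
    (hA4 : Tendsto (fun m : ℕ => Real.sqrt m * |Δ m|) atTop atTop)
    (hA5 : ∃ M : ℝ, ∀ m : ℕ, |Δ m| ≤ M)
    (ha : ∀ m : ℕ, 0 < a m ∧
      a m = σ * c * (m : ℝ) ^ ((1 : ℝ) / 2 - γ) * (Δ m)⁻¹ * a m ^ γ + (kstar θ β m : ℝ))
    (x : ℝ) :
    Tendsto (fun m : ℕ =>
        σ⁻¹ * (Nseq σ c γ Δ (kstar θ β) a x m / m) ^ (γ - 1 / 2) *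
          (σ * c - Δ m * (m : ℝ) ^ (γ - 1 / 2) *
            (Nseq σ c γ Δ (kstar θ β) a x m ^ (1 - γ) -
              (kstar θ β m : ℝ) / Nseq σ c γ Δ (kstar θ β) a x m ^ γ)))
      atTop (𝓝 x) := by
  obtain ⟨hγ0, hγ2⟩ := hγ
  have hγ1 : (0:ℝ) < 1 - γ := by linarith
  have hap : ∀ m, 0 < a m := fun m => (ha m).1
  have hsq : ∀ m, 0 < Real.sqrt (a m) := fun m => Real.sqrt_pos.mpr (hap m)
  set kf : ℕ → ℝ := fun m => (kstar θ β m : ℝ) with hkfdef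
  set s : ℕ → ℝ := fun m => 1 - γ * (1 - kf m / a m) with hsdef
  set e : ℕ → ℝ := fun m => σ * x * (1 - γ) / (Δ m * Real.sqrt (a m) * s m) with hedef
  have hbasic : ∀ m, 1 ≤ m → 0 ≤ kf m / a m ∧ kf m / a m < 1 ∧ 1 - γ ≤ s m := by
    intro m hm
    have hmR : (0:ℝ) < (m:ℝ) := by exact_mod_cast hm
    have hmp : (0:ℝ) < (m:ℝ) ^ ((1:ℝ)/2 - γ) := Real.rpow_pos_of_pos hmR _
    have haγ : (0:ℝ) < a m ^ γ := Real.rpow_pos_of_pos (hap m) γ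
    have hD : 0 < σ * c * (m:ℝ) ^ ((1:ℝ)/2 - γ) * (Δ m)⁻¹ * a m ^ γ :=
      mul_pos (mul_pos (mul_pos (mul_pos hσ hc) hmp) (inv_pos.mpr (hΔpos m))) haγ
    have hka : kf m < a m := by
      have := (ha m).2
      simp only [hkfdef]
      rw [this]
      linarith
    have hr0 : 0 ≤ kf m / a m := div_nonneg (Nat.cast_nonneg _) (hap m).le
    refine ⟨hr0, (div_lt_one (hap m)).mpr hka, ?_⟩
    simp only [hsdef]
    nlinarith [mul_nonneg hγ0 hr0]
  have hspos : ∀ m, 1 ≤ m → 0 < s m := fun m hm =>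
    lt_of_lt_of_le hγ1 (hbasic m hm).2.2
  -- (1) Δ m * sqrt (a m) → ∞
  have hΔa : Tendsto (fun m => Δ m * Real.sqrt (a m)) atTop atTop := by
    have hA4' : Tendsto (fun m : ℕ => Real.sqrt m * Δ m) atTop atTop := by
      refine hA4.congr fun m => ?_
      rw [abs_of_pos (hΔpos m)]
    have h2γ : (0:ℝ) < 1 - 2*γ := by linarith
    have h22γ : (0:ℝ) < 2 - 2*γ := by linarith
    have t1 := (tendsto_rpow_atTop h2γ).comp hA4'
    have t2 := t1.const_mul_atTop (mul_pos hσ hc)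
    have t3 := (tendsto_rpow_atTop (show (0:ℝ) < 1/(2 - 2*γ) by positivity)).comp t2
    refine tendsto_atTop_mono' atTop ?_ t3
    filter_upwards [eventually_ge_atTop 1] with m hm
    have hmR : (0:ℝ) < (m:ℝ) := by exact_mod_cast hm
    have hΔ := hΔpos m
    have hQ := hsq m
    have ha1 := ha1_lemma σ c θ β γ Δ a m hΔ (hap m) (ha m).2
    have hstep1 : σ * c * (m:ℝ) ^ ((1:ℝ)/2 - γ) / Δ m ≤ a m ^ ((1:ℝ) - γ) := by
      rw [ha1]
      have : 0 ≤ (kstar θ β m : ℝ) / a m ^ γ :=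
        div_nonneg (Nat.cast_nonneg _) (Real.rpow_pos_of_pos (hap m) γ).le
      linarith
    have e1 : (Δ m * Real.sqrt (a m)) ^ ((2:ℝ) - 2*γ) =
        Δ m ^ ((2:ℝ) - 2*γ) * a m ^ ((1:ℝ) - γ) := by
      rw [Real.mul_rpow hΔ.le hQ.le, Real.sqrt_eq_rpow, ← Real.rpow_mul (hap m).le,
        show (1:ℝ)/2 * (2 - 2*γ) = 1 - γ by ring]
    have e2 : σ * c * (Real.sqrt m * Δ m) ^ ((1:ℝ) - 2*γ) =
        Δ m ^ ((2:ℝ) - 2*γ) * (σ * c * (m:ℝ) ^ ((1:ℝ)/2 - γ) / Δ m) := by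
      rw [Real.mul_rpow (Real.sqrt_nonneg _) hΔ.le, Real.sqrt_eq_rpow,
        ← Real.rpow_mul (Nat.cast_nonneg m),
        show (1:ℝ)/2 * (1 - 2*γ) = 1/2 - γ by ring,
        show (2:ℝ) - 2*γ = (1 - 2*γ) + 1 by ring, Real.rpow_add hΔ, Real.rpow_one]
      field_simp
    have hchain : σ * c * (Real.sqrt m * Δ m) ^ ((1:ℝ) - 2*γ) ≤
        (Δ m * Real.sqrt (a m)) ^ ((2:ℝ) - 2*γ) := by
      rw [e1, e2]
      exact mul_le_mul_of_nonneg_left hstep1 (Real.rpow_nonneg hΔ.le _)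
    have hLnn : 0 ≤ σ * c * (Real.sqrt m * Δ m) ^ ((1:ℝ) - 2*γ) :=
      mul_nonneg (mul_pos hσ hc).le
        (Real.rpow_nonneg (mul_nonneg (Real.sqrt_nonneg _) hΔ.le) _)
    have hfin := Real.rpow_le_rpow hLnn hchain (le_of_lt
      (show (0:ℝ) < 1/(2 - 2*γ) by positivity))
    calc (fun t : ℝ => t ^ ((1:ℝ)/(2 - 2*γ)))
          ((fun m : ℕ => σ * c * ((fun m : ℕ => Real.sqrt m * Δ m) m) ^ ((1:ℝ) - 2*γ)) m)
        = (σ * c * (Real.sqrt m * Δ m) ^ ((1:ℝ) - 2*γ)) ^ ((1:ℝ)/(2 - 2*γ)) := rfl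
      _ ≤ ((Δ m * Real.sqrt (a m)) ^ ((2:ℝ) - 2*γ)) ^ ((1:ℝ)/(2 - 2*γ)) := hfin
      _ = Δ m * Real.sqrt (a m) := by
          rw [← Real.rpow_mul (mul_nonneg hΔ.le hQ.le),
            mul_one_div_cancel h22γ.ne', Real.rpow_one]
  -- (2) e → 0
  have he0 : Tendsto e atTop (𝓝 0) := by
    apply squeeze_zero_norm' (a := fun m => σ * |x| * (Δ m * Real.sqrt (a m))⁻¹)
    · filter_upwards [eventually_ge_atTop 1] with m hm
      have hdpos : 0 < Δ m * Real.sqrt (a m) * s m :=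
        mul_pos (mul_pos (hΔpos m) (hsq m)) (hspos m hm)
      rw [Real.norm_eq_abs, hedef]
      rw [abs_div, abs_of_pos hdpos, abs_mul, abs_mul, abs_of_pos hσ,
        abs_of_pos hγ1]
      calc σ * |x| * (1 - γ) / (Δ m * Real.sqrt (a m) * s m)
          ≤ σ * |x| * (1 - γ) / (Δ m * Real.sqrt (a m) * (1 - γ)) := by
            gcongr
            · exact mul_pos (mul_pos (hΔpos m) (hsq m)) hγ1
            · exact mul_nonneg (hΔpos m).le (hsq m).le
            · exact (hbasic m hm).2.2
        _ = σ * |x| * (Δ m * Real.sqrt (a m))⁻¹ := by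
            rw [div_eq_mul_inv, mul_inv, ← mul_assoc]
            have h1 : 0 < Δ m * Real.sqrt (a m) := mul_pos (hΔpos m) (hsq m)
            field_simp
    · have h := hΔa.inv_tendsto_atTop
      have h2 := h.const_mul (σ * |x|)
      simpa using h2
  -- (3) gg γ (e m) → γ/(1-γ)
  have hgconv : Tendsto (fun m => gg γ (e m)) atTop (𝓝 (γ / (1 - γ))) := by
    rcases eq_or_ne x 0 with hx | hx
    · have hezero : ∀ m, e m = 0 := fun m => by simp [hedef, hx]
      have : (fun m => gg γ (e m)) = fun _ : ℕ => γ / (1 - γ) := by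
        funext m; rw [hezero m]; simp [gg]
      rw [this]
      exact tendsto_const_nhds
    · have hne : ∀ᶠ m in atTop, e m ≠ 0 := by
        filter_upwards [eventually_ge_atTop 1] with m hm
        have hdpos : 0 < Δ m * Real.sqrt (a m) * s m :=
          mul_pos (mul_pos (hΔpos m) (hsq m)) (hspos m hm)
        simp only [hedef]
        exact div_ne_zero (mul_ne_zero (mul_ne_zero hσ.ne' hx) hγ1.ne') hdpos.ne'
      have hnw : Tendsto e atTop (𝓝[≠] (0:ℝ)) :=
        tendsto_nhdsWithin_iff.mpr ⟨he0, hne.mono fun m h => h⟩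
      have hcomp := (slope_rpow (-(γ/(1-γ)))).comp hnw
      rw [neg_neg] at hcomp
      refine hcomp.congr' ?_
      filter_upwards [hne] with m hm
      simp only [Function.comp_apply, gg, if_neg hm]
  -- (4) (1 - e m) ^ ((γ-1/2)/(1-γ)) → 1
  have hUconv : Tendsto (fun m => (1 - e m) ^ ((γ - 1/2)/(1 - γ))) atTop (𝓝 1) := by
    have h1t : Tendsto (fun m => 1 - e m) atTop (𝓝 1) := by
      simpa using tendsto_const_nhds.sub he0
    have hcont := (Real.continuousAt_rpow_const 1 ((γ - 1/2)/(1 - γ))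
      (Or.inl one_ne_zero)).tendsto
    have := hcont.comp h1t
    simpa [Real.one_rpow, Function.comp_def] using this
  -- (5) correction term → 0
  have hw : Tendsto (fun m => (1 - γ) * gg γ (e m) - γ) atTop (𝓝 0) := by
    have h := (hgconv.const_mul (1 - γ)).sub (tendsto_const_nhds (x := γ))
    have hz : (1 - γ) * (γ / (1 - γ)) - γ = 0 := by field_simp; ring
    rw [hz] at h
    exact h
  have hterm : Tendsto (fun m => kf m / a m / s m * ((1 - γ) * gg γ (e m) - γ))
      atTop (𝓝 0) := by
    apply squeeze_zero_norm' (a := fun m => (1 - γ)⁻¹ * |(1 - γ) * gg γ (e m) - γ|)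
    · filter_upwards [eventually_ge_atTop 1] with m hm
      rw [Real.norm_eq_abs, abs_mul]
      have h1 : |kf m / a m / s m| ≤ (1 - γ)⁻¹ := by
        rw [abs_of_nonneg (div_nonneg (hbasic m hm).1 (hspos m hm).le)]
        have h2 : kf m / a m / s m ≤ 1 / (1 - γ) :=
          div_le_div₀ zero_le_one (hbasic m hm).2.1.le hγ1 (hbasic m hm).2.2
        rwa [one_div] at h2
      exact mul_le_mul_of_nonneg_right h1 (abs_nonneg _)
    · have h := hw.abs.const_mul (1 - γ)⁻¹
      simpa using h
  -- (6) the full factor → 1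
  have hB : Tendsto (fun m => (1 + kf m / a m / s m * ((1 - γ) * gg γ (e m) - γ)) *
      (1 - e m) ^ ((γ - 1/2)/(1 - γ))) atTop (𝓝 1) := by
    have h := ((tendsto_const_nhds (x := (1:ℝ))).add hterm).mul hUconv
    simpa using h
  -- conclusion
  have hxB : Tendsto (fun m => x * ((1 + kf m / a m / s m * ((1 - γ) * gg γ (e m) - γ)) *
      (1 - e m) ^ ((γ - 1/2)/(1 - γ)))) atTop (𝓝 x) := by
    have h := hB.const_mul x
    simpa using h
  have habs : ∀ᶠ m in atTop, |e m| < 1/2 := by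
    have h := he0.abs
    rw [abs_zero] at h
    exact h.eventually_lt_const (by norm_num)
  refine Tendsto.congr' ?_ hxB
  filter_upwards [eventually_ge_atTop 1, habs] with m hm hem
  exact (key_identity σ c θ β γ x Δ a m hσ hc hγ0 hγ2 (hΔpos m) hm (hap m) (ha m).2
    (s m) (e m) rfl rfl hem).symm

end
end
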